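/- arXiv:2204.00440 — 7 statements merged into one kernel-verified Lean document; each statement's English description precedes it below -/
import Mathlib

section
/- Let H be a Hermitian n×n complex matrix. For every density matrix ρ one has S(ρ) − Re tr(ρH) ≤ log tr(exp(−H)), and equality holds if and only if ρ = exp(−H)/tr(exp(−H)). (Finite-volume Gibbs variational principle, equation (eq:PLambdaVariational) of the paper.) -/
open scoped Matrix ComplexOrder
open Matrix

namespace GibbsAux

lemma klein_nonneg {p s : ℝ} (hp : 0 ≤ p) (hs : 0 < s) :
    0 ≤ p * Real.log p - p * Real.log s - p + s := by
  rcases eq_or_lt_of_le hp with h | h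
  · simp [← h]; linarith
  · have h1 := Real.log_le_sub_one_of_pos (div_pos hs h)
    rw [Real.log_div hs.ne' h.ne'] at h1
    have h2 : p * (s / p) = s := mul_div_cancel₀ _ h.ne'
    nlinarith

lemma klein_eq_zero_iff {p s : ℝ} (hp : 0 ≤ p) (hs : 0 < s) :
    p * Real.log p - p * Real.log s - p + s = 0 ↔ p = s := by
  constructor
  · intro h0
    rcases eq_or_lt_of_le hp with h | h
    · exfalso; rw [← h] at h0; simp at h0; linarith
    · by_contra hne
      have hq : s / p ≠ 1 := by
        intro hq1
        exact hne ((div_eq_one_iff_eq h.ne').mp hq1).symm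
      have h1 := Real.log_lt_sub_one_of_pos (div_pos hs h) hq
      rw [Real.log_div hs.ne' h.ne'] at h1
      have h2 : p * (s / p) = s := mul_div_cancel₀ _ h.ne'
      nlinarith
  · rintro rfl; ring

lemma trace_unitary_conj {n : ℕ} (W A : Matrix (Fin n) (Fin n) ℂ)
    (hW : W ∈ Matrix.unitaryGroup (Fin n) ℂ) :
    (W * A * star W).trace = A.trace := by
  rw [Matrix.trace_mul_comm, ← Matrix.mul_assoc,
    (Matrix.mem_unitaryGroup_iff'.mp hW), Matrix.one_mul]

lemma trace_diag_mul_diag {n : ℕ} (M : Matrix (Fin n) (Fin n) ℂ) (a b : Fin n → ℝ) :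
    (Matrix.diagonal (fun j => (a j : ℂ)) * M * Matrix.diagonal (fun k => (b k : ℂ)) *
        star M).trace
      = ((∑ j, ∑ k, a j * b k * Complex.normSq (M j k) : ℝ) : ℂ) := by
  rw [Matrix.trace]
  push_cast
  refine Finset.sum_congr rfl fun j _ => ?_
  rw [Matrix.diag_apply, Matrix.mul_apply]
  refine Finset.sum_congr rfl fun k _ => ?_
  rw [Matrix.mul_diagonal, Matrix.diagonal_mul, Matrix.star_apply, RCLike.star_def]
  rw [show ((a j : ℂ) * M j k * (b k : ℂ) * (starRingEnd ℂ) (M j k) : ℂ)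
      = (a j : ℂ) * (b k : ℂ) * (M j k * (starRingEnd ℂ) (M j k)) by ring,
    Complex.mul_conj]

lemma row_sum_one {n : ℕ} (M : Matrix (Fin n) (Fin n) ℂ)
    (hM : M ∈ Matrix.unitaryGroup (Fin n) ℂ) (j : Fin n) :
    ∑ k, Complex.normSq (M j k) = 1 := by
  have h := congrFun (congrFun (Matrix.mem_unitaryGroup_iff.mp hM) j) j
  simp only [Matrix.mul_apply, Matrix.star_apply, RCLike.star_def, Matrix.one_apply_eq] at h
  have : ∀ k, M j k * (starRingEnd ℂ) (M j k) = (Complex.normSq (M j k) : ℂ) :=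
    fun k => Complex.mul_conj _
  simp_rw [this] at h
  exact_mod_cast h

lemma col_sum_one {n : ℕ} (M : Matrix (Fin n) (Fin n) ℂ)
    (hM : M ∈ Matrix.unitaryGroup (Fin n) ℂ) (k : Fin n) :
    ∑ j, Complex.normSq (M j k) = 1 := by
  have h := congrFun (congrFun (Matrix.mem_unitaryGroup_iff'.mp hM) k) k
  simp only [Matrix.mul_apply, Matrix.star_apply, RCLike.star_def, Matrix.one_apply_eq] at h
  have : ∀ j, (starRingEnd ℂ) (M j k) * M j k = (Complex.normSq (M j k) : ℂ) := by
    intro j; rw [mul_comm]; exact Complex.mul_conj _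
  simp_rw [this] at h
  exact_mod_cast h

lemma exp_neg_spectral {n : ℕ} (H : Matrix (Fin n) (Fin n) ℂ) (hH : H.IsHermitian) :
    NormedSpace.exp (-H) =
      (hH.eigenvectorUnitary : Matrix (Fin n) (Fin n) ℂ) *
        Matrix.diagonal (fun k => (Real.exp (-(hH.eigenvalues k)) : ℂ)) *
        star (hH.eigenvectorUnitary : Matrix (Fin n) (Fin n) ℂ) := by
  set U := (hH.eigenvectorUnitary : Matrix (Fin n) (Fin n) ℂ) with hUdef
  have hU : U ∈ Matrix.unitaryGroup (Fin n) ℂ := hH.eigenvectorUnitary.2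
  have hUinv : U⁻¹ = star U := Matrix.inv_eq_right_inv (Matrix.mem_unitaryGroup_iff.mp hU)
  have hUnit : IsUnit U :=
    ⟨⟨U, star U, Matrix.mem_unitaryGroup_iff.mp hU, Matrix.mem_unitaryGroup_iff'.mp hU⟩, rfl⟩
  have h1 : -H = U * Matrix.diagonal (fun k => (-(hH.eigenvalues k) : ℂ)) * U⁻¹ := by
    rw [hUinv]
    conv_lhs => rw [hH.spectral_theorem]
    rw [Unitary.conjStarAlgAut_apply]
    rw [← Matrix.neg_mul, ← Matrix.mul_neg, ← Matrix.diagonal_neg]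
    rfl
  rw [h1, Matrix.exp_conj U _ hUnit, hUinv, Matrix.exp_diagonal]
  congr 2
  funext k
  rw [Pi.exp_def, ← Complex.exp_eq_exp_ℂ]
  push_cast
  rfl

lemma trace_exp_neg {n : ℕ} (H : Matrix (Fin n) (Fin n) ℂ) (hH : H.IsHermitian) :
    (NormedSpace.exp (-H)).trace = ((∑ k, Real.exp (-(hH.eigenvalues k)) : ℝ) : ℂ) := by
  rw [exp_neg_spectral H hH,
    trace_unitary_conj _ _ hH.eigenvectorUnitary.2, Matrix.trace_diagonal]
  push_cast
  rfl

end GibbsAux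

/-- The von Neumann entropy of a matrix: `−Σ_i λ_i log λ_i` over the eigenvalues
(with the convention `0 log 0 = 0`), defined for Hermitian matrices. -/
noncomputable def vnEntropy {n : ℕ} (ρ : Matrix (Fin n) (Fin n) ℂ) : ℝ :=
  if h : ρ.IsHermitian then ∑ i, Real.negMulLog (h.eigenvalues i) else 0

set_option maxHeartbeats 1000000 in
/-- Finite-volume Gibbs variational principle: for Hermitian `H` and any density matrix `ρ`,
`S(ρ) − Re tr(ρH) ≤ log tr(exp(−H))`, with equality iff `ρ = exp(−H)/tr(exp(−H))`. -/
theorem finite_volume_gibbs_variational_principle {n : ℕ} (hn : 0 < n)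
    (H ρ : Matrix (Fin n) (Fin n) ℂ) (hH : H.IsHermitian)
    (hρ : ρ.PosSemidef) (hρ1 : ρ.trace = 1) :
    vnEntropy ρ - ((ρ * H).trace).re ≤ Real.log ((NormedSpace.exp (-H)).trace).re ∧
      (vnEntropy ρ - ((ρ * H).trace).re = Real.log ((NormedSpace.exp (-H)).trace).re ↔
        ρ = ((NormedSpace.exp (-H)).trace)⁻¹ • NormedSpace.exp (-H)) := by
  classical
  have hρH : ρ.IsHermitian := hρ.1
  set e : Fin n → ℝ := hH.eigenvalues with he
  set p : Fin n → ℝ := hρH.eigenvalues with hp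
  set U : Matrix (Fin n) (Fin n) ℂ := (hH.eigenvectorUnitary : Matrix (Fin n) (Fin n) ℂ)
    with hUdef
  set V : Matrix (Fin n) (Fin n) ℂ := (hρH.eigenvectorUnitary : Matrix (Fin n) (Fin n) ℂ)
    with hVdef
  have hUmem : U ∈ Matrix.unitaryGroup (Fin n) ℂ := hH.eigenvectorUnitary.2
  have hVmem : V ∈ Matrix.unitaryGroup (Fin n) ℂ := hρH.eigenvectorUnitary.2
  set M : Matrix (Fin n) (Fin n) ℂ := star V * U with hMdef
  have hMmem : M ∈ Matrix.unitaryGroup (Fin n) ℂ :=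
    mul_mem (Unitary.star_mem hVmem) hUmem
  set c : Fin n → Fin n → ℝ := fun j k => Complex.normSq (M j k) with hc
  have hcnonneg : ∀ j k, 0 ≤ c j k := fun j k => Complex.normSq_nonneg _
  have rowsum : ∀ j, ∑ k, c j k = 1 := GibbsAux.row_sum_one M hMmem
  have colsum : ∀ k, ∑ j, c j k = 1 := GibbsAux.col_sum_one M hMmem
  set Z : ℝ := ∑ k, Real.exp (-(e k)) with hZ
  have hZpos : 0 < Z := by
    refine Finset.sum_pos (fun k _ => Real.exp_pos _) ?_
    rw [Finset.univ_nonempty_iff]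
    exact Fin.pos_iff_nonempty.mp hn
  set s : Fin n → ℝ := fun k => Real.exp (-(e k)) / Z with hs
  have hspos : ∀ k, 0 < s k := fun k => div_pos (Real.exp_pos _) hZpos
  have hssum : ∑ k, s k = 1 := by
    rw [hs, ← Finset.sum_div, ← hZ, div_self hZpos.ne']
  have hpnonneg : ∀ j, 0 ≤ p j := fun j => hρ.eigenvalues_nonneg j
  have htrexp : (NormedSpace.exp (-H)).trace = (Z : ℂ) := GibbsAux.trace_exp_neg H hH
  have htrexpre : ((NormedSpace.exp (-H)).trace).re = Z := by
    rw [htrexp, Complex.ofReal_re]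
  have hρspec : ρ = V * Matrix.diagonal (fun j => (p j : ℂ)) * star V := by
    conv_lhs => rw [hρH.spectral_theorem]
    rfl
  have hpsum : ∑ j, p j = 1 := by
    have h1 : ρ.trace = ((∑ j, p j : ℝ) : ℂ) := by
      rw [hρspec, GibbsAux.trace_unitary_conj _ _ hVmem, Matrix.trace_diagonal]
      push_cast
      rfl
    rw [hρ1] at h1
    exact_mod_cast h1.symm
  have hHspec : H = U * Matrix.diagonal (fun k => (e k : ℂ)) * star U := by
    conv_lhs => rw [hH.spectral_theorem]
    rfl
  have htrρH : ((ρ * H).trace) = ((∑ j, ∑ k, p j * e k * c j k : ℝ) : ℂ) := by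
    have hVV : V * star V = 1 := Matrix.mem_unitaryGroup_iff.mp hVmem
    have hmat : ρ * H =
        V * (Matrix.diagonal (fun j => (p j : ℂ)) * M * Matrix.diagonal (fun k => (e k : ℂ)) *
          star M) * star V := by
      rw [hρspec, hHspec, hMdef, Matrix.star_mul, star_star]
      simp only [Matrix.mul_assoc]
      rw [hVV, Matrix.mul_one]
    rw [hmat, GibbsAux.trace_unitary_conj _ _ hVmem, GibbsAux.trace_diag_mul_diag]
  have htrρHre : ((ρ * H).trace).re = ∑ j, ∑ k, p j * e k * c j k := by
    rw [htrρH, Complex.ofReal_re]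
  have hvn : vnEntropy ρ = ∑ j, Real.negMulLog (p j) := by
    unfold vnEntropy
    rw [dif_pos hρH]
  set T : ℝ := ∑ j, ∑ k,
    c j k * (p j * Real.log (p j) - p j * Real.log (s k) - p j + s k) with hT
  have hTnonneg : 0 ≤ T := by
    refine Finset.sum_nonneg fun j _ => Finset.sum_nonneg fun k _ => ?_
    exact mul_nonneg (hcnonneg j k) (GibbsAux.klein_nonneg (hpnonneg j) (hspos k))
  have hlogs : ∀ k, e k = -Real.log (s k) - Real.log Z := by
    intro k
    rw [hs]
    simp only []
    rw [Real.log_div (Real.exp_pos _).ne' hZpos.ne', Real.log_exp]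
    ring
  have hsum0 : ∑ j, ∑ k, c j k * (s k - p j) = 0 := by
    have h1 : ∑ j, ∑ k, c j k * p j = 1 := by
      have h0 : ∀ j, ∑ k, c j k * p j = p j := by
        intro j
        rw [← Finset.sum_mul, rowsum j, one_mul]
      simp_rw [h0]
      exact hpsum
    have h2 : ∑ j, ∑ k, c j k * s k = 1 := by
      rw [Finset.sum_comm]
      have h0 : ∀ k, ∑ j, c j k * s k = s k := by
        intro k
        rw [← Finset.sum_mul, colsum k, one_mul]
      simp_rw [h0]
      exact hssum
    simp only [mul_sub, Finset.sum_sub_distrib]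
    rw [h1, h2]
    ring
  have hA : ∑ j, Real.negMulLog (p j) = ∑ j, ∑ k, c j k * Real.negMulLog (p j) := by
    refine Finset.sum_congr rfl fun j _ => ?_
    rw [← Finset.sum_mul, rowsum j, one_mul]
  have hD : ∑ j, ∑ k, p j * e k * c j k
      = ∑ j, ∑ k, c j k * (p j * (-Real.log (s k) - Real.log Z)) := by
    refine Finset.sum_congr rfl fun j _ => Finset.sum_congr rfl fun k _ => ?_
    rw [hlogs k]; ring
  have hB : Real.log Z = ∑ j, ∑ k, c j k * (p j * Real.log Z) := by
    have h0 : ∀ j, ∑ k, c j k * (p j * Real.log Z) = p j * Real.log Z := by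
      intro j
      rw [← Finset.sum_mul, rowsum j, one_mul]
    simp_rw [h0]
    rw [← Finset.sum_mul, hpsum, one_mul]
  have hcomb : (∑ j, ∑ k, c j k * Real.negMulLog (p j))
      - (∑ j, ∑ k, c j k * (p j * (-Real.log (s k) - Real.log Z)))
      - (∑ j, ∑ k, c j k * (p j * Real.log Z)) + T
      = ∑ j, ∑ k, c j k * (s k - p j) := by
    rw [hT]
    simp only [← Finset.sum_sub_distrib, ← Finset.sum_add_distrib]
    refine Finset.sum_congr rfl fun j _ => Finset.sum_congr rfl fun k _ => ?_
    simp only [Real.negMulLog]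
    ring
  have hkey : (∑ j, Real.negMulLog (p j)) - (∑ j, ∑ k, p j * e k * c j k) - Real.log Z
      = -T := by
    linarith [hA, hD, hB, hcomb, hsum0]
  have hre : vnEntropy ρ - ((ρ * H).trace).re
      - Real.log ((NormedSpace.exp (-H)).trace).re = -T := by
    rw [hvn, htrρHre, htrexpre]
    exact hkey
  constructor
  · linarith [hTnonneg, hre]
  · have hiff1 : (vnEntropy ρ - ((ρ * H).trace).re
        = Real.log ((NormedSpace.exp (-H)).trace).re) ↔ T = 0 := by
      constructor <;> intro h <;> linarith [hre]
    have hterm : ∀ j k, 0 ≤ c j k *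
        (p j * Real.log (p j) - p j * Real.log (s k) - p j + s k) :=
      fun j k => mul_nonneg (hcnonneg j k) (GibbsAux.klein_nonneg (hpnonneg j) (hspos k))
    have hiff2 : T = 0 ↔ ∀ j k, M j k = 0 ∨ p j = s k := by
      rw [hT, Finset.sum_eq_zero_iff_of_nonneg
        (fun j _ => Finset.sum_nonneg fun k _ => hterm j k)]
      constructor
      · intro h j k
        have hj := h j (Finset.mem_univ j)
        rw [Finset.sum_eq_zero_iff_of_nonneg (fun k _ => hterm j k)] at hj
        have hk := hj k (Finset.mem_univ k)
        rcases mul_eq_zero.mp hk with h0 | h0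
        · left
          exact Complex.normSq_eq_zero.mp h0
        · right
          exact (GibbsAux.klein_eq_zero_iff (hpnonneg j) (hspos k)).mp h0
      · intro h j _
        rw [Finset.sum_eq_zero_iff_of_nonneg (fun k _ => hterm j k)]
        intro k _
        rcases h j k with h0 | h0
        · have hc0 : c j k = 0 := Complex.normSq_eq_zero.mpr h0
          rw [hc0, zero_mul]
        · rw [(GibbsAux.klein_eq_zero_iff (hpnonneg j) (hspos k)).mpr h0, mul_zero]
    have hUU : U * star U = 1 := Matrix.mem_unitaryGroup_iff.mp hUmem
    have hU'U : star U * U = 1 := Matrix.mem_unitaryGroup_iff'.mp hUmem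
    have hVV : V * star V = 1 := Matrix.mem_unitaryGroup_iff.mp hVmem
    have hV'V : star V * V = 1 := Matrix.mem_unitaryGroup_iff'.mp hVmem
    have habs : ∀ A : Matrix (Fin n) (Fin n) ℂ, V * (star V * A * U) * star U = A := by
      intro A
      simp only [Matrix.mul_assoc]
      rw [hUU, Matrix.mul_one, ← Matrix.mul_assoc, hVV, Matrix.one_mul]
    have hconj : ∀ A B : Matrix (Fin n) (Fin n) ℂ,
        (A = B) ↔ (star V * A * U = star V * B * U) := by
      intro A B
      constructor
      · intro h; rw [h]
      · intro h
        have h2 : V * (star V * A * U) * star U = V * (star V * B * U) * star U := by rw [h]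
        rwa [habs, habs] at h2
    have hexps : NormedSpace.exp (-H)
        = U * Matrix.diagonal (fun k => (Real.exp (-(e k)) : ℂ)) * star U :=
      GibbsAux.exp_neg_spectral H hH
    have hL : star V * (V * Matrix.diagonal (fun j => (p j : ℂ)) * star V) * U
        = Matrix.diagonal (fun j => (p j : ℂ)) * M := by
      rw [hMdef]
      simp only [Matrix.mul_assoc]
      rw [← Matrix.mul_assoc, hV'V, Matrix.one_mul, ← Matrix.mul_assoc]
    have hR : star V * ((Z : ℂ)⁻¹ • (U * Matrix.diagonal (fun k => (Real.exp (-(e k)) : ℂ))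
          * star U)) * U
        = (Z : ℂ)⁻¹ • (M * Matrix.diagonal (fun k => (Real.exp (-(e k)) : ℂ))) := by
      rw [hMdef]
      rw [Matrix.mul_smul, Matrix.smul_mul]
      refine congrArg (fun X => (Z : ℂ)⁻¹ • X) ?_
      simp only [Matrix.mul_assoc]
      rw [hU'U, Matrix.mul_one, ← Matrix.mul_assoc]
    have hiff3 : (ρ = ((NormedSpace.exp (-H)).trace)⁻¹ • NormedSpace.exp (-H)) ↔
        ∀ j k, (p j : ℂ) * M j k = (s k : ℂ) * M j k := by
      rw [htrexp, hexps]
      conv_lhs => rw [hρspec]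
      rw [hconj, hL, hR, ← Matrix.ext_iff]
      refine forall_congr' fun j => forall_congr' fun k => ?_
      rw [Matrix.diagonal_mul, Matrix.smul_apply, Matrix.mul_diagonal, smul_eq_mul]
      have hsC : (s k : ℂ) = (Z : ℂ)⁻¹ * (Real.exp (-(e k)) : ℂ) := by
        rw [hs]
        push_cast
        ring
      rw [hsC, mul_assoc, mul_comm ((Real.exp (-(e k)) : ℝ) : ℂ) (M j k)]
    have hiff4 : (∀ j k, (p j : ℂ) * M j k = (s k : ℂ) * M j k) ↔
        ∀ j k, M j k = 0 ∨ p j = s k := by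
      refine forall_congr' fun j => forall_congr' fun k => ?_
      constructor
      · intro h
        rcases eq_or_ne (M j k) 0 with h0 | h0
        · exact Or.inl h0
        · refine Or.inr ?_
          have h1 : (p j : ℂ) = (s k : ℂ) := mul_right_cancel₀ h0 h
          exact_mod_cast h1
      · rintro (h0 | h0)
        · rw [h0, mul_zero, mul_zero]
        · rw [h0]
    exact hiff1.trans (hiff2.trans (hiff4.symm.trans hiff3.symm))
end

section
/- Let K be a Hermitian n×n complex matrix and let σ = exp(−K)/tr(exp(−K)) be the associated Gibbs density matrix. If ρ is any density matrix with S(ρ) ≥ S(σ), then Re tr(ρK) ≥ Re tr(σK). (Finite-dimensional form of the mechanism behind Theorem thm-mil: a state whose entropy is at least that of the Gibbs state has at least the Gibbs mean energy.) -/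
open scoped Matrix ComplexOrder

open Matrix Polynomial in
theorem det_aux {n : ℕ} (U : Matrix.unitaryGroup (Fin n) ℂ) (d : Fin n → ℝ) (z : ℂ) :
    ((z • (1 : Matrix (Fin n) (Fin n) ℂ)) -
      (U : Matrix (Fin n) (Fin n) ℂ) * Matrix.diagonal (fun i => (d i : ℂ)) *
        star (U : Matrix (Fin n) (Fin n) ℂ)).det = ∏ i, (z - (d i : ℂ)) := by
  have h1 : (U : Matrix (Fin n) (Fin n) ℂ) * (z • (1:Matrix (Fin n) (Fin n) ℂ) - Matrix.diagonal (fun i => (d i : ℂ))) * star (U : Matrix (Fin n) (Fin n) ℂ)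
      = z • (1 : Matrix (Fin n) (Fin n) ℂ) - (U : Matrix (Fin n) (Fin n) ℂ) * Matrix.diagonal (fun i => (d i : ℂ)) * star (U : Matrix (Fin n) (Fin n) ℂ) := by
    rw [Matrix.mul_sub, Matrix.sub_mul]
    congr 1
    simp [Matrix.mul_smul, Matrix.smul_mul]
  rw [← h1, Matrix.det_mul_right_comm, Matrix.smul_one_eq_diagonal]
  simp [Matrix.diagonal_sub, Matrix.det_diagonal]

open Matrix Polynomial in
theorem sum_f_eig {n : ℕ} {A : Matrix (Fin n) (Fin n) ℂ} (hA : A.IsHermitian)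
    (U : Matrix.unitaryGroup (Fin n) ℂ) (d : Fin n → ℝ)
    (hAU : A = (U : Matrix (Fin n) (Fin n) ℂ) * Matrix.diagonal (fun i => (d i : ℂ)) *
      star (U : Matrix (Fin n) (Fin n) ℂ))
    (f : ℝ → ℝ) : ∑ i, f (hA.eigenvalues i) = ∑ i, f (d i) := by
  have key : ∀ z : ℂ, ∏ i, (z - (hA.eigenvalues i : ℂ)) = ∏ i, (z - (d i : ℂ)) := by
    intro z
    have hA2 : A = (hA.eigenvectorUnitary : Matrix (Fin n) (Fin n) ℂ) *
        Matrix.diagonal (fun i => ((hA.eigenvalues i : ℂ))) *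
        star (hA.eigenvectorUnitary : Matrix (Fin n) (Fin n) ℂ) := hA.spectral_theorem
    rw [← det_aux U d z, ← det_aux hA.eigenvectorUnitary hA.eigenvalues z, ← hAU, ← hA2]
  have hpoly : (∏ i : Fin n, (X - C ((hA.eigenvalues i : ℂ)))) = ∏ i : Fin n, (X - C ((d i : ℂ))) := by
    apply Polynomial.funext
    intro z
    simpa [Polynomial.eval_prod] using key z
  have hmult : (Finset.univ.val.map (fun i => ((hA.eigenvalues i : ℂ)))) =
      (Finset.univ.val.map (fun i => ((d i : ℂ)))) := by
    have h1 := Polynomial.roots_multiset_prod_X_sub_C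
      (Finset.univ.val.map (fun i : Fin n => ((hA.eigenvalues i : ℂ))))
    have h2 := Polynomial.roots_multiset_prod_X_sub_C
      (Finset.univ.val.map (fun i : Fin n => ((d i : ℂ))))
    rw [← h1, ← h2]
    congr 1
    rw [Multiset.map_map, Multiset.map_map]
    simpa [Finset.prod_eq_multiset_prod, Multiset.map_map] using hpoly
  calc ∑ i, f (hA.eigenvalues i)
      = ((Finset.univ.val.map (fun i => ((hA.eigenvalues i : ℂ)))).map (fun z => f z.re)).sum := by
        rw [Multiset.map_map]; rfl
    _ = ((Finset.univ.val.map (fun i => ((d i : ℂ)))).map (fun z => f z.re)).sum := by rw [hmult]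
    _ = ∑ i, f (d i) := by rw [Multiset.map_map]; rfl

theorem klein_aux {n : ℕ} (p q : Fin n → ℝ) (c : Fin n → Fin n → ℝ)
    (hp : ∀ i, 0 ≤ p i) (hq : ∀ j, 0 < q j) (hc : ∀ i j, 0 ≤ c i j)
    (hrow : ∀ i, ∑ j, c i j = 1)
    (hp1 : ∑ i, p i = 1) (hcq : ∑ i, ∑ j, c i j * q j = 1) :
    ∑ i, ∑ j, p i * c i j * Real.log (q j) ≤ ∑ i, p i * Real.log (p i) := by
  have key : ∀ i, ∑ j, p i * c i j * Real.log (q j) - p i * Real.log (p i)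
      ≤ ∑ j, c i j * q j - p i := by
    intro i
    rcases eq_or_lt_of_le (hp i) with h0 | h0
    · simp only [← h0, zero_mul, mul_zero, Finset.sum_const_zero, sub_zero, zero_sub, neg_zero]
      exact Finset.sum_nonneg fun j _ => mul_nonneg (hc i j) (hq j).le
    · have hterm : ∀ j, p i * c i j * Real.log (q j) - p i * c i j * Real.log (p i)
          ≤ c i j * q j - p i * c i j := by
        intro j
        have hlog : Real.log (q j) - Real.log (p i) ≤ q j / p i - 1 := by
          rw [← Real.log_div (ne_of_gt (hq j)) (ne_of_gt h0)]
          exact Real.log_le_sub_one_of_pos (div_pos (hq j) h0)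
        have := mul_le_mul_of_nonneg_left hlog
          (mul_nonneg (le_of_lt h0) (hc i j))
        calc p i * c i j * Real.log (q j) - p i * c i j * Real.log (p i)
            = p i * c i j * (Real.log (q j) - Real.log (p i)) := by ring
          _ ≤ p i * c i j * (q j / p i - 1) := this
          _ = c i j * q j - p i * c i j := by field_simp
      calc ∑ j, p i * c i j * Real.log (q j) - p i * Real.log (p i)
          = ∑ j, (p i * c i j * Real.log (q j) - p i * c i j * Real.log (p i)) := by
            rw [Finset.sum_sub_distrib]
            congr 1
            rw [← Finset.sum_mul, ← Finset.mul_sum, hrow, mul_one]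
        _ ≤ ∑ j, (c i j * q j - p i * c i j) := Finset.sum_le_sum fun j _ => hterm j
        _ = ∑ j, c i j * q j - p i := by
            rw [Finset.sum_sub_distrib, ← Finset.mul_sum, hrow, mul_one]
  have := Finset.sum_le_sum (fun i (_ : i ∈ Finset.univ) => key i)
  rw [Finset.sum_sub_distrib, Finset.sum_sub_distrib, hp1, hcq] at this
  linarith

theorem trace_re_aux {n : ℕ} (p k : Fin n → ℝ) (B : Matrix (Fin n) (Fin n) ℂ) :
    ((Matrix.diagonal (fun i => (p i : ℂ)) *
      (star B * Matrix.diagonal (fun j => (k j : ℂ)) * B)).trace).re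
      = ∑ i, ∑ j, p i * k j * Complex.normSq (B j i) := by
  rw [Matrix.trace, Complex.re_sum]
  apply Finset.sum_congr rfl
  intro i _
  rw [Matrix.diag_apply, Matrix.diagonal_mul, Matrix.mul_apply, Finset.mul_sum, Complex.re_sum]
  apply Finset.sum_congr rfl
  intro j _
  rw [Matrix.mul_diagonal, Matrix.star_apply]
  simp [Complex.mul_re, Complex.mul_im, Complex.normSq_apply]
  ring

theorem col_sum_normSq {n : ℕ} (B : Matrix (Fin n) (Fin n) ℂ) (hB : star B * B = 1)
    (i : Fin n) : ∑ j, Complex.normSq (B j i) = 1 := by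
  have h := congrFun (congrFun hB i) i
  rw [Matrix.mul_apply] at h
  have h2 := congrArg Complex.re h
  rw [Complex.re_sum] at h2
  simpa [Matrix.star_apply, Matrix.one_apply_eq, Complex.mul_re, Complex.normSq_apply,
    mul_comm] using h2

theorem row_sum_normSq {n : ℕ} (B : Matrix (Fin n) (Fin n) ℂ) (hB : B * star B = 1)
    (j : Fin n) : ∑ i, Complex.normSq (B j i) = 1 := by
  have h := congrFun (congrFun hB j) j
  rw [Matrix.mul_apply] at h
  have h2 := congrArg Complex.re h
  rw [Complex.re_sum] at h2
  simpa [Matrix.star_apply, Matrix.one_apply_eq, Complex.mul_re, Complex.normSq_apply,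
    mul_comm] using h2

/-- If a density matrix `ρ` has entropy at least that of the Gibbs state
`σ = exp(−K)/tr(exp(−K))`, then its mean energy `Re tr(ρK)` is at least the Gibbs mean
energy `Re tr(σK)`. -/
theorem energy_ge_of_entropy_ge_gibbs {n : ℕ} (hn : 0 < n)
    (K ρ σ : Matrix (Fin n) (Fin n) ℂ) (hK : K.IsHermitian)
    (hσ : σ = ((NormedSpace.exp (-K)).trace)⁻¹ • NormedSpace.exp (-K))
    (hρ : ρ.PosSemidef) (hρ1 : ρ.trace = 1)
    (hS : vnEntropy σ ≤ vnEntropy ρ) :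
    ((σ * K).trace).re ≤ ((ρ * K).trace).re := by
  classical
  set W := hK.eigenvectorUnitary with hWdef
  set k := hK.eigenvalues with hkdef
  have hKs : K = (W : Matrix (Fin n) (Fin n) ℂ) * Matrix.diagonal (fun i => ((k i : ℂ))) *
      star (W : Matrix (Fin n) (Fin n) ℂ) := hK.spectral_theorem
  have hW1 : star (W : Matrix (Fin n) (Fin n) ℂ) * (W : Matrix (Fin n) (Fin n) ℂ) = 1 := W.2.1
  have hW2 : (W : Matrix (Fin n) (Fin n) ℂ) * star (W : Matrix (Fin n) (Fin n) ℂ) = 1 := W.2.2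
  -- exponential
  have hexp : NormedSpace.exp (-K)
      = (W : Matrix (Fin n) (Fin n) ℂ) * Matrix.diagonal (fun i => ((Real.exp (-(k i)) : ℂ))) *
        star (W : Matrix (Fin n) (Fin n) ℂ) := by
    have hinv : (((Unitary.toUnits W)⁻¹ : (Matrix (Fin n) (Fin n) ℂ)ˣ) : Matrix (Fin n) (Fin n) ℂ)
        = star (W : Matrix (Fin n) (Fin n) ℂ) := rfl
    have hneg : -K = ((Unitary.toUnits W : (Matrix (Fin n) (Fin n) ℂ)ˣ) : Matrix (Fin n) (Fin n) ℂ) *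
        Matrix.diagonal (fun i => ((-(k i) : ℝ) : ℂ)) *
        (((Unitary.toUnits W)⁻¹ : (Matrix (Fin n) (Fin n) ℂ)ˣ) : Matrix (Fin n) (Fin n) ℂ) := by
      rw [hinv]
      show -K = (W : Matrix (Fin n) (Fin n) ℂ) * Matrix.diagonal (fun i => ((-(k i) : ℝ) : ℂ)) *
        star (W : Matrix (Fin n) (Fin n) ℂ)
      rw [hKs, ← Matrix.neg_mul, ← Matrix.mul_neg]
      congr 2
      ext i j
      by_cases h : i = j
      · simp [h]
      · simp [h]
    rw [hneg, Matrix.exp_units_conj, Matrix.exp_diagonal, hinv]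
    have hfun : (NormedSpace.exp (fun i => ((-(k i) : ℝ) : ℂ)) : Fin n → ℂ)
        = fun i => ((Real.exp (-(k i)) : ℂ)) := by
      rw [Pi.exp_def]
      funext i
      rw [← Complex.exp_eq_exp_ℂ, ← Complex.ofReal_exp]
    rw [hfun]
    rfl
  set Z := ∑ i, Real.exp (-(k i)) with hZdef
  have hZpos : 0 < Z := Finset.sum_pos (fun i _ => Real.exp_pos _)
    (Finset.univ_nonempty_iff.2 (Fin.pos_iff_nonempty.mp hn))
  have hZ : (NormedSpace.exp (-K)).trace = (Z : ℂ) := by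
    rw [hexp, Matrix.trace_mul_cycle, hW1, Matrix.one_mul, Matrix.trace_diagonal, hZdef]
    norm_cast
  set q : Fin n → ℝ := fun i => Real.exp (-(k i)) / Z with hqdef
  have hqpos : ∀ j, 0 < q j := fun j => div_pos (Real.exp_pos _) hZpos
  have hq1 : ∑ j, q j = 1 := by
    rw [hqdef, ← Finset.sum_div, ← hZdef, div_self hZpos.ne']
  have hσW : σ = (W : Matrix (Fin n) (Fin n) ℂ) * Matrix.diagonal (fun i => ((q i : ℂ))) *
      star (W : Matrix (Fin n) (Fin n) ℂ) := by
    have hd : (Z : ℂ)⁻¹ • Matrix.diagonal (fun i => ((Real.exp (-(k i)) : ℂ)))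
        = Matrix.diagonal (fun i => ((q i : ℂ))) := by
      ext i j
      rcases eq_or_ne i j with h | h
      · subst h
        simp [Matrix.diagonal_apply_eq, hqdef, smul_eq_mul]
        field_simp
      · simp [Matrix.diagonal_apply_ne _ h]
    rw [hσ, hZ, hexp, ← hd, Matrix.mul_smul, Matrix.smul_mul]
  have hσH : σ.IsHermitian := by
    rw [hσW]
    have hdH : (Matrix.diagonal (fun i => ((q i : ℂ)))).IsHermitian := by
      apply Matrix.isHermitian_diagonal_of_self_adjoint
      show star (fun i => ((q i : ℂ))) = fun i => ((q i : ℂ))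
      funext i
      simp [Complex.conj_ofReal]
    exact Matrix.isHermitian_mul_mul_conjTranspose _ hdH
  -- ρ spectral data
  have hρH : ρ.IsHermitian := hρ.1
  set U := hρH.eigenvectorUnitary with hUdef
  set p := hρH.eigenvalues with hpdef
  have hρs : ρ = (U : Matrix (Fin n) (Fin n) ℂ) * Matrix.diagonal (fun i => ((p i : ℂ))) *
      star (U : Matrix (Fin n) (Fin n) ℂ) := hρH.spectral_theorem
  have hU1 : star (U : Matrix (Fin n) (Fin n) ℂ) * (U : Matrix (Fin n) (Fin n) ℂ) = 1 := U.2.1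
  have hU2 : (U : Matrix (Fin n) (Fin n) ℂ) * star (U : Matrix (Fin n) (Fin n) ℂ) = 1 := U.2.2
  have hp0 : ∀ i, 0 ≤ p i := fun i => hρ.eigenvalues_nonneg i
  have hp1 : ∑ i, p i = 1 := by
    have h : ρ.trace = ∑ i, (p i : ℂ) := by
      rw [congrArg Matrix.trace hρs, Matrix.trace_mul_cycle, hU1, Matrix.one_mul]
      exact Matrix.trace_diagonal _
    have h2 : (∑ i, (p i : ℂ)) = 1 := h.symm.trans hρ1
    exact_mod_cast h2
  -- entropies
  have hSσ : vnEntropy σ = ∑ i, Real.negMulLog (q i) := by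
    rw [vnEntropy, dif_pos hσH]
    exact sum_f_eig hσH W q hσW Real.negMulLog
  have hSρ : vnEntropy ρ = ∑ i, Real.negMulLog (p i) := by
    rw [vnEntropy, dif_pos hρH]
  -- log of q
  have hkq : ∀ j, k j = -Real.log (q j) - Real.log Z := by
    intro j
    rw [hqdef]
    rw [Real.log_div (Real.exp_pos _).ne' hZpos.ne', Real.log_exp]
    ring
  -- energy of σ
  have hEσ : ((σ * K).trace).re = ∑ j, q j * k j := by
    have hprod : σ * K = (W : Matrix (Fin n) (Fin n) ℂ) *
        (Matrix.diagonal (fun i => ((q i : ℂ))) * Matrix.diagonal (fun i => ((k i : ℂ)))) *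
        star (W : Matrix (Fin n) (Fin n) ℂ) := by
      rw [hσW, hKs]
      simp only [Matrix.mul_assoc]
      congr 2
      rw [← Matrix.mul_assoc (star (W : Matrix (Fin n) (Fin n) ℂ)), hW1, Matrix.one_mul]
    rw [hprod, Matrix.trace_mul_cycle, hW1, Matrix.one_mul,
      Matrix.diagonal_mul_diagonal, Matrix.trace_diagonal, Complex.re_sum]
    apply Finset.sum_congr rfl
    intro j _
    rw [← Complex.ofReal_mul, Complex.ofReal_re]
  -- energy of ρ
  set B : Matrix (Fin n) (Fin n) ℂ := star (W : Matrix (Fin n) (Fin n) ℂ) *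
    (U : Matrix (Fin n) (Fin n) ℂ) with hBdef
  have hsB : star B = star (U : Matrix (Fin n) (Fin n) ℂ) * (W : Matrix (Fin n) (Fin n) ℂ) := by
    rw [hBdef, StarMul.star_mul, star_star]
  have hB1 : star B * B = 1 := by
    rw [hsB, hBdef]
    calc (star (U : Matrix (Fin n) (Fin n) ℂ) * (W : Matrix (Fin n) (Fin n) ℂ)) *
        (star (W : Matrix (Fin n) (Fin n) ℂ) * (U : Matrix (Fin n) (Fin n) ℂ))
        = star (U : Matrix (Fin n) (Fin n) ℂ) * ((W : Matrix (Fin n) (Fin n) ℂ) *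
          star (W : Matrix (Fin n) (Fin n) ℂ)) * (U : Matrix (Fin n) (Fin n) ℂ) := by
          simp only [Matrix.mul_assoc]
      _ = 1 := by rw [hW2, Matrix.mul_one, hU1]
  have hB2 : B * star B = 1 := by
    rw [hsB, hBdef]
    calc (star (W : Matrix (Fin n) (Fin n) ℂ) * (U : Matrix (Fin n) (Fin n) ℂ)) *
        (star (U : Matrix (Fin n) (Fin n) ℂ) * (W : Matrix (Fin n) (Fin n) ℂ))
        = star (W : Matrix (Fin n) (Fin n) ℂ) * ((U : Matrix (Fin n) (Fin n) ℂ) *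
          star (U : Matrix (Fin n) (Fin n) ℂ)) * (W : Matrix (Fin n) (Fin n) ℂ) := by
          simp only [Matrix.mul_assoc]
      _ = 1 := by rw [hU2, Matrix.mul_one, hW1]
  set c : Fin n → Fin n → ℝ := fun i j => Complex.normSq (B j i) with hcdef
  have hc0 : ∀ i j, 0 ≤ c i j := fun i j => Complex.normSq_nonneg _
  have hrow : ∀ i, ∑ j, c i j = 1 := fun i => col_sum_normSq B hB1 i
  have hcol : ∀ j, ∑ i, c i j = 1 := fun j => row_sum_normSq B hB2 j
  have hcq : ∑ i, ∑ j, c i j * q j = 1 := by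
    rw [Finset.sum_comm]
    calc ∑ j, ∑ i, c i j * q j = ∑ j, q j := by
          apply Finset.sum_congr rfl
          intro j _
          rw [← Finset.sum_mul, hcol j, one_mul]
      _ = 1 := hq1
  have hEρ : ((ρ * K).trace).re = ∑ i, ∑ j, p i * k j * c i j := by
    have hprod : ρ * K = (U : Matrix (Fin n) (Fin n) ℂ) *
        (Matrix.diagonal (fun i => ((p i : ℂ))) *
          (star B * Matrix.diagonal (fun i => ((k i : ℂ))) * B)) *
        star (U : Matrix (Fin n) (Fin n) ℂ) := by
      rw [hρs, hKs, hsB, hBdef]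
      simp only [Matrix.mul_assoc]
      rw [hU2, Matrix.mul_one]
    rw [hprod, Matrix.trace_mul_cycle, hU1, Matrix.one_mul]
    exact trace_re_aux p k B
  -- final assembly
  set T := ∑ i, ∑ j, p i * c i j * Real.log (q j) with hTdef
  have hklein : T ≤ ∑ i, p i * Real.log (p i) :=
    klein_aux p q c hp0 hqpos hc0 hrow hp1 hcq
  have hnegS : ∑ i, p i * Real.log (p i) = -∑ i, Real.negMulLog (p i) := by
    rw [← Finset.sum_neg_distrib]
    apply Finset.sum_congr rfl
    intro i _
    rw [Real.negMulLog]
    ring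
  have hEσ2 : ∑ j, q j * k j = (∑ j, Real.negMulLog (q j)) - Real.log Z := by
    calc ∑ j, q j * k j = ∑ j, (Real.negMulLog (q j) - q j * Real.log Z) := by
          apply Finset.sum_congr rfl
          intro j _
          rw [hkq j, Real.negMulLog]
          ring
      _ = (∑ j, Real.negMulLog (q j)) - (∑ j, q j) * Real.log Z := by
          rw [Finset.sum_sub_distrib, Finset.sum_mul]
      _ = (∑ j, Real.negMulLog (q j)) - Real.log Z := by rw [hq1, one_mul]
  have hpcZ : ∑ i, ∑ j, p i * c i j * Real.log Z = Real.log Z := by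
    calc ∑ i, ∑ j, p i * c i j * Real.log Z = ∑ i, p i * Real.log Z := by
          apply Finset.sum_congr rfl
          intro i _
          rw [← Finset.sum_mul, ← Finset.mul_sum, hrow i, mul_one]
      _ = (∑ i, p i) * Real.log Z := by rw [Finset.sum_mul]
      _ = Real.log Z := by rw [hp1, one_mul]
  have hzero : ∑ i, ∑ j, (p i * k j * c i j + p i * c i j * Real.log (q j)
      + p i * c i j * Real.log Z) = 0 := by
    apply Finset.sum_eq_zero
    intro i _
    apply Finset.sum_eq_zero
    intro j _
    rw [hkq j]
    ring
  have hsplit : ∑ i, ∑ j, (p i * k j * c i j + p i * c i j * Real.log (q j)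
      + p i * c i j * Real.log Z)
      = (∑ i, ∑ j, p i * k j * c i j) + T + ∑ i, ∑ j, p i * c i j * Real.log Z := by
    rw [hTdef]
    simp only [Finset.sum_add_distrib]
  have hEρ2 : ∑ i, ∑ j, p i * k j * c i j = -T - Real.log Z := by
    have := hsplit.symm.trans hzero
    rw [hpcZ] at this
    linarith
  rw [hEσ, hEρ, hEσ2, hEρ2]
  rw [hSσ, hSρ] at hS
  linarith
end

section
/- Let K be a Hermitian n×n complex matrix and let σ = exp(−K)/tr(exp(−K)) be the associated Gibbs density matrix. If ρ is a density matrix with S(ρ) ≥ S(σ) and Re tr(ρK) = Re tr(σK), then ρ = σ. (Finite-dimensional form of the mechanism behind Theorems thm-main-2 and main-thm-1: equality of mean energy and entropy with the Gibbs state forces the state to be the Gibbs state.) -/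
open scoped Matrix ComplexOrder
open Matrix Finset

namespace GibbsAux

variable {n : ℕ}

lemma row_sum_normSq {M : Matrix (Fin n) (Fin n) ℂ} (h : M * Mᴴ = 1) (i : Fin n) :
    ∑ j, Complex.normSq (M i j) = 1 := by
  have h2 : ∑ j, (Complex.normSq (M i j) : ℂ) = 1 := by
    simpa [Matrix.mul_apply, Matrix.conjTranspose_apply, Matrix.one_apply,
      Complex.mul_conj] using congrFun (congrFun h i) i
  exact_mod_cast h2

lemma col_sum_normSq {M : Matrix (Fin n) (Fin n) ℂ} (h : Mᴴ * M = 1) (j : Fin n) :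
    ∑ i, Complex.normSq (M i j) = 1 := by
  have h' : Mᴴ * (Mᴴ)ᴴ = 1 := by rwa [Matrix.conjTranspose_conjTranspose]
  simpa [Matrix.conjTranspose_apply, Complex.normSq_conj] using row_sum_normSq h' j

lemma intertwine {W U : Matrix (Fin n) (Fin n) ℂ}
    (hW : Wᴴ * W = 1) (hU : Uᴴ * U = 1) {μ q : Fin n → ℝ}
    (h : W * Matrix.diagonal (fun i => (μ i : ℂ)) * Wᴴ
        = U * Matrix.diagonal (fun i => (q i : ℂ)) * Uᴴ) :
    ∀ i j, (Wᴴ * U) i j ≠ 0 → μ i = q j := by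
  have key : Matrix.diagonal (fun i => (μ i : ℂ)) * (Wᴴ * U)
      = (Wᴴ * U) * Matrix.diagonal (fun i => (q i : ℂ)) := by
    calc Matrix.diagonal (fun i => (μ i : ℂ)) * (Wᴴ * U)
        = (Wᴴ * W) * Matrix.diagonal (fun i => (μ i : ℂ)) * (Wᴴ * U) := by
          rw [hW, Matrix.one_mul]
      _ = Wᴴ * (W * Matrix.diagonal (fun i => (μ i : ℂ)) * Wᴴ) * U := by noncomm_ring
      _ = Wᴴ * (U * Matrix.diagonal (fun i => (q i : ℂ)) * Uᴴ) * U := by rw [h]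
      _ = (Wᴴ * U) * Matrix.diagonal (fun i => (q i : ℂ)) * (Uᴴ * U) := by noncomm_ring
      _ = (Wᴴ * U) * Matrix.diagonal (fun i => (q i : ℂ)) := by rw [hU, Matrix.mul_one]
  intro i j hij
  have := congrFun (congrFun key i) j
  rw [Matrix.diagonal_mul, Matrix.mul_diagonal] at this
  have : ((μ i : ℂ) - (q j : ℂ)) * (Wᴴ * U) i j = 0 := by
    rw [sub_mul, this, mul_comm, sub_self]
  rcases mul_eq_zero.mp this with h0 | h0
  · exact_mod_cast sub_eq_zero.mp h0
  · exact absurd h0 hij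

lemma sum_transfer {c : Fin n → Fin n → ℝ} {μ q : Fin n → ℝ}
    (hrow : ∀ i, ∑ j, c i j = 1) (hcol : ∀ j, ∑ i, c i j = 1)
    (hkey : ∀ i j, c i j ≠ 0 → μ i = q j) (f : ℝ → ℝ) :
    ∑ i, f (μ i) = ∑ j, f (q j) := by
  calc ∑ i, f (μ i) = ∑ i, ∑ j, c i j * f (μ i) := by
        refine Finset.sum_congr rfl fun i _ => ?_
        rw [← Finset.sum_mul, hrow i, one_mul]
    _ = ∑ i, ∑ j, c i j * f (q j) := by
        refine Finset.sum_congr rfl fun i _ => Finset.sum_congr rfl fun j _ => ?_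
        rcases eq_or_ne (c i j) 0 with h0 | h0
        · rw [h0, zero_mul, zero_mul]
        · rw [hkey i j h0]
    _ = ∑ j, f (q j) := by
        rw [Finset.sum_comm]
        refine Finset.sum_congr rfl fun j _ => ?_
        rw [← Finset.sum_mul, hcol j, one_mul]

lemma trace_form {V U : Matrix (Fin n) (Fin n) ℂ} (p a : Fin n → ℝ) :
    ((V * Matrix.diagonal (fun i => (p i : ℂ)) * Vᴴ)
      * (U * Matrix.diagonal (fun j => (a j : ℂ)) * Uᴴ)).trace
      = ((∑ i, ∑ j, p i * a j * Complex.normSq ((Vᴴ * U) i j) : ℝ) : ℂ) := by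
  set M := Vᴴ * U with hM
  have hstep : (V * Matrix.diagonal (fun i => (p i : ℂ)) * Vᴴ)
      * (U * Matrix.diagonal (fun j => (a j : ℂ)) * Uᴴ)
      = V * (Matrix.diagonal (fun i => (p i : ℂ)) * M
          * Matrix.diagonal (fun j => (a j : ℂ)) * Uᴴ) := by
    rw [hM]; noncomm_ring
  have hcyc : (Matrix.diagonal (fun i => (p i : ℂ)) * M
      * Matrix.diagonal (fun j => (a j : ℂ)) * Uᴴ) * V
      = Matrix.diagonal (fun i => (p i : ℂ)) * M
        * Matrix.diagonal (fun j => (a j : ℂ)) * Mᴴ := by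
    rw [hM, Matrix.conjTranspose_mul, Matrix.conjTranspose_conjTranspose, Matrix.mul_assoc]
  rw [hstep, Matrix.trace_mul_comm, hcyc]
  have hA : Matrix.diagonal (fun i => (p i : ℂ)) * M * Matrix.diagonal (fun j => (a j : ℂ))
      = Matrix.of (fun i j => (p i : ℂ) * M i j * (a j : ℂ)) := by
    ext i j
    simp [Matrix.diagonal_mul, Matrix.mul_diagonal]
  rw [hA, Matrix.trace]
  push_cast
  refine Finset.sum_congr rfl fun i _ => ?_
  simp only [Matrix.diag, Matrix.mul_apply, Matrix.of_apply,
    Matrix.conjTranspose_apply, Complex.star_def]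
  refine Finset.sum_congr rfl fun j _ => ?_
  rw [← Complex.mul_conj]
  ring

lemma klein_scalar {p q : Fin n → ℝ} {c : Fin n → Fin n → ℝ}
    (hp : ∀ i, 0 ≤ p i) (hq : ∀ j, 0 < q j) (hc : ∀ i j, 0 ≤ c i j)
    (hrow : ∀ i, ∑ j, c i j = 1) (hcol : ∀ j, ∑ i, c i j = 1)
    (hp1 : ∑ i, p i = 1) (hq1 : ∑ j, q j = 1)
    (hmain : 0 ≤ ∑ i, ∑ j, c i j * p i * (Real.log (q j) - Real.log (p i))) :
    ∀ i j, c i j ≠ 0 → p i = q j := by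
  set g : Fin n → Fin n → ℝ := fun i j => c i j * p i * (Real.log (q j) - Real.log (p i))
    with hg
  set u : Fin n → Fin n → ℝ := fun i j => c i j * (q j - p i) with hu
  have hgu : ∀ i j, g i j ≤ u i j := by
    intro i j
    rcases eq_or_lt_of_le (hp i) with h0 | h0
    · simp only [hg, hu, ← h0, Real.log_zero, sub_zero, mul_zero, zero_mul, sub_zero]
      exact mul_nonneg (hc i j) (le_of_lt (hq j))
    · have hx : 0 < q j / p i := div_pos (hq j) h0
      have hlog : Real.log (q j) - Real.log (p i) = Real.log (q j / p i) := by
        rw [Real.log_div (ne_of_gt (hq j)) (ne_of_gt h0)]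
      have hle : Real.log (q j / p i) ≤ q j / p i - 1 := Real.log_le_sub_one_of_pos hx
      have : p i * Real.log (q j / p i) ≤ p i * (q j / p i - 1) :=
        mul_le_mul_of_nonneg_left hle (le_of_lt h0)
      have h2 : p i * (q j / p i - 1) = q j - p i := by field_simp
      calc g i j = c i j * (p i * Real.log (q j / p i)) := by simp only [hg]; rw [hlog]; ring
        _ ≤ c i j * (q j - p i) := by
            rw [← h2]; exact mul_le_mul_of_nonneg_left this (hc i j)
  have husum : ∑ i, ∑ j, u i j = 0 := by
    have h1 : ∑ i, ∑ j, c i j * q j = 1 := by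
      rw [Finset.sum_comm]
      calc ∑ j, ∑ i, c i j * q j = ∑ j, q j := by
            refine Finset.sum_congr rfl fun j _ => ?_
            rw [← Finset.sum_mul, hcol j, one_mul]
        _ = 1 := hq1
    have h2 : ∑ i, ∑ j, c i j * p i = 1 := by
      calc ∑ i, ∑ j, c i j * p i = ∑ i, p i := by
            refine Finset.sum_congr rfl fun i _ => ?_
            rw [← Finset.sum_mul, hrow i, one_mul]
        _ = 1 := hp1
    have : ∑ i, ∑ j, u i j = (∑ i, ∑ j, c i j * q j) - ∑ i, ∑ j, c i j * p i := by
      rw [← Finset.sum_sub_distrib]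
      refine Finset.sum_congr rfl fun i _ => ?_
      rw [← Finset.sum_sub_distrib]
      refine Finset.sum_congr rfl fun j _ => ?_
      simp only [hu]; ring
    rw [this, h1, h2, sub_self]
  -- total equality
  have hgsum : ∑ i, ∑ j, g i j = 0 := by
    have hle : ∑ i, ∑ j, g i j ≤ 0 := by
      rw [← husum]
      exact Finset.sum_le_sum fun i _ => Finset.sum_le_sum fun j _ => hgu i j
    linarith [hmain]
  have heq1 : ∀ i ∈ Finset.univ, ∑ j, g i j = ∑ j, u i j := by
    rw [← Finset.sum_eq_sum_iff_of_le
      (fun i _ => Finset.sum_le_sum fun j _ => hgu i j)]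
    rw [hgsum, husum]
  have heq : ∀ i j, g i j = u i j := by
    intro i j
    have := (Finset.sum_eq_sum_iff_of_le (fun j _ => hgu i j)).mp
      (heq1 i (Finset.mem_univ i))
    exact this j (Finset.mem_univ j)
  have hppos : ∀ i, 0 < p i := by
    intro i
    rcases eq_or_lt_of_le (hp i) with h0 | h0
    · exfalso
      have hzero : ∀ j, c i j * q j = 0 := by
        intro j
        have := heq i j
        simp only [hg, hu, ← h0, Real.log_zero, sub_zero, mul_zero, zero_mul] at this
        linarith [this]
      have : ∑ j, c i j = 0 := by
        refine Finset.sum_eq_zero fun j _ => ?_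
        rcases mul_eq_zero.mp (hzero j) with h | h
        · exact h
        · exact absurd h (ne_of_gt (hq j))
      rw [hrow i] at this
      norm_num at this
    · exact h0
  intro i j hcij
  have hcpos : 0 < c i j := lt_of_le_of_ne (hc i j) (Ne.symm hcij)
  have h0 := hppos i
  have hx : 0 < q j / p i := div_pos (hq j) h0
  have hlog : Real.log (q j) - Real.log (p i) = Real.log (q j / p i) := by
    rw [Real.log_div (ne_of_gt (hq j)) (ne_of_gt h0)]
  by_contra hne
  have hxne : q j / p i ≠ 1 := by
    intro h
    exact hne ((div_eq_one_iff_eq (ne_of_gt h0)).mp h).symm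
  have hstrict : Real.log (q j / p i) < q j / p i - 1 :=
    Real.log_lt_sub_one_of_pos hx hxne
  have := heq i j
  simp only [hg, hu] at this
  rw [hlog] at this
  have h2 : p i * (q j / p i - 1) = q j - p i := by field_simp
  nlinarith [mul_lt_mul_of_pos_left hstrict h0, mul_lt_mul_of_pos_left
    (mul_lt_mul_of_pos_left hstrict h0) hcpos]

lemma mul_ct_one {V U : Matrix (Fin n) (Fin n) ℂ} (hV : Vᴴ * V = 1) (hU : U * Uᴴ = 1) :
    (Vᴴ * U) * (Vᴴ * U)ᴴ = 1 := by
  rw [Matrix.conjTranspose_mul, Matrix.conjTranspose_conjTranspose]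
  calc (Vᴴ * U) * (Uᴴ * V) = Vᴴ * (U * Uᴴ) * V := by noncomm_ring
    _ = 1 := by rw [hU, Matrix.mul_one, hV]

lemma ct_mul_one {V U : Matrix (Fin n) (Fin n) ℂ} (hV : V * Vᴴ = 1) (hU : Uᴴ * U = 1) :
    (Vᴴ * U)ᴴ * (Vᴴ * U) = 1 := by
  rw [Matrix.conjTranspose_mul, Matrix.conjTranspose_conjTranspose]
  calc (Uᴴ * V) * (Vᴴ * U) = Uᴴ * (V * Vᴴ) * U := by noncomm_ring
    _ = 1 := by rw [hV, Matrix.mul_one, hU]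

end GibbsAux

open GibbsAux in
/-- If a density matrix `ρ` has entropy at least that of the Gibbs state
`σ = exp(−K)/tr(exp(−K))` and the same mean energy, then `ρ = σ`. -/
theorem eq_gibbs_of_entropy_ge_and_energy_eq {n : ℕ} (hn : 0 < n)
    (K ρ σ : Matrix (Fin n) (Fin n) ℂ) (hK : K.IsHermitian)
    (hσ : σ = ((NormedSpace.exp (-K)).trace)⁻¹ • NormedSpace.exp (-K))
    (hρ : ρ.PosSemidef) (hρ1 : ρ.trace = 1)
    (hS : vnEntropy σ ≤ vnEntropy ρ)
    (hE : ((ρ * K).trace).re = ((σ * K).trace).re) :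
    ρ = σ := by
  classical
  have hne : Nonempty (Fin n) := ⟨⟨0, hn⟩⟩
  -- spectral decomposition of K
  set U : Matrix (Fin n) (Fin n) ℂ := (hK.eigenvectorUnitary : Matrix (Fin n) (Fin n) ℂ)
    with hUdef
  set κ : Fin n → ℝ := hK.eigenvalues with hκdef
  have hU1 : Uᴴ * U = 1 := by
    simpa [Matrix.star_eq_conjTranspose] using Unitary.coe_star_mul_self hK.eigenvectorUnitary
  have hU2 : U * Uᴴ = 1 := by
    simpa [Matrix.star_eq_conjTranspose] using Unitary.coe_mul_star_self hK.eigenvectorUnitary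
  have hKspec : K = U * Matrix.diagonal (fun i => (κ i : ℂ)) * Uᴴ := by
    simpa [Matrix.star_eq_conjTranspose, Function.comp_def] using hK.spectral_theorem
  -- the exponential of -K
  set E : Fin n → ℝ := fun i => Real.exp (-κ i) with hEdef
  have hexp : NormedSpace.exp (-K) = U * Matrix.diagonal (fun i => (E i : ℂ)) * Uᴴ := by
    have hUinv : U⁻¹ = Uᴴ := Matrix.inv_eq_left_inv hU1
    have hUunit : IsUnit U := ⟨⟨U, Uᴴ, hU2, hU1⟩, rfl⟩
    have hnegK : -K = U * Matrix.diagonal (fun i => ((-κ i : ℝ) : ℂ)) * U⁻¹ := by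
      rw [hUinv, hKspec]
      have : Matrix.diagonal (fun i => ((-κ i : ℝ) : ℂ))
          = -Matrix.diagonal (fun i => ((κ i : ℝ) : ℂ)) := by
        rw [show (fun i => ((-κ i : ℝ) : ℂ)) = fun i => -((κ i : ℝ) : ℂ) by
          funext i; push_cast; ring, Matrix.diagonal_neg]
      rw [this]
      noncomm_ring
    have hdiag : (NormedSpace.exp (fun i => ((-κ i : ℝ) : ℂ)) : Fin n → ℂ)
        = fun i => (E i : ℂ) := by
      funext i
      rw [Pi.coe_exp, ← Complex.exp_eq_exp_ℂ, hEdef]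
      rw [Complex.ofReal_exp]
    rw [hnegK, Matrix.exp_conj U _ hUunit, Matrix.exp_diagonal, hdiag, hUinv]
  -- the partition function
  set Z : ℝ := ∑ i, E i with hZdef
  have hZpos : 0 < Z := Finset.sum_pos (fun i _ => Real.exp_pos _) Finset.univ_nonempty
  have htr : (NormedSpace.exp (-K)).trace = (Z : ℂ) := by
    rw [hexp, Matrix.trace_mul_comm, ← Matrix.mul_assoc, hU1, Matrix.one_mul,
      Matrix.trace_diagonal]
    norm_cast
  set q : Fin n → ℝ := fun j => E j / Z with hqdef
  have hq : ∀ j, 0 < q j := fun j => div_pos (Real.exp_pos _) hZpos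
  have hq1 : ∑ j, q j = 1 := by
    rw [hqdef]
    rw [← Finset.sum_div, ← hZdef, div_self (ne_of_gt hZpos)]
  have hσspec : σ = U * Matrix.diagonal (fun j => (q j : ℂ)) * Uᴴ := by
    rw [hσ, htr, hexp]
    have hsc : ((Z : ℂ))⁻¹ • (fun i => ((E i : ℂ))) = fun j => ((q j : ℂ)) := by
      funext j
      rw [Pi.smul_apply, smul_eq_mul]
      simp only [hqdef]
      push_cast
      ring
    rw [← Matrix.smul_mul, ← Matrix.mul_smul, ← Matrix.diagonal_smul, hsc]
  -- spectral decomposition of ρ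
  have hρH : ρ.IsHermitian := hρ.1
  set V : Matrix (Fin n) (Fin n) ℂ := (hρH.eigenvectorUnitary : Matrix (Fin n) (Fin n) ℂ)
    with hVdef
  set p : Fin n → ℝ := hρH.eigenvalues with hpdef
  have hV1 : Vᴴ * V = 1 := by
    simpa [Matrix.star_eq_conjTranspose] using Unitary.coe_star_mul_self hρH.eigenvectorUnitary
  have hV2 : V * Vᴴ = 1 := by
    simpa [Matrix.star_eq_conjTranspose] using Unitary.coe_mul_star_self hρH.eigenvectorUnitary
  have hρspec : ρ = V * Matrix.diagonal (fun i => (p i : ℂ)) * Vᴴ := by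
    simpa [Matrix.star_eq_conjTranspose, Function.comp_def] using hρH.spectral_theorem
  have hp : ∀ i, 0 ≤ p i := fun i => hρ.eigenvalues_nonneg i
  have hp1 : ∑ i, p i = 1 := by
    have h1 : ρ.trace = ((∑ i, p i : ℝ) : ℂ) := by
      rw [hρspec, Matrix.trace_mul_comm, ← Matrix.mul_assoc, hV1, Matrix.one_mul,
        Matrix.trace_diagonal]
      norm_cast
    rw [hρ1] at h1
    exact_mod_cast h1.symm
  -- the overlap matrix
  set M : Matrix (Fin n) (Fin n) ℂ := Vᴴ * U with hMdef
  have hM1 : Mᴴ * M = 1 := ct_mul_one hV2 hU1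
  have hM2 : M * Mᴴ = 1 := mul_ct_one hV1 hU2
  set c : Fin n → Fin n → ℝ := fun i j => Complex.normSq (M i j) with hcdef
  have hc : ∀ i j, 0 ≤ c i j := fun i j => Complex.normSq_nonneg _
  have hrow : ∀ i, ∑ j, c i j = 1 := fun i => row_sum_normSq hM2 i
  have hcol : ∀ j, ∑ i, c i j = 1 := fun j => col_sum_normSq hM1 j
  -- energies
  have hEρ : ((ρ * K).trace).re = ∑ i, ∑ j, p i * κ j * c i j := by
    rw [hρspec, hKspec, trace_form p κ]
    exact Complex.ofReal_re _
  have hEσ : ((σ * K).trace).re = ∑ j, q j * κ j := by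
    rw [hσspec, hKspec, trace_form q κ]
    rw [Complex.ofReal_re]
    rw [hU1]
    simp [Matrix.one_apply, apply_ite Complex.normSq, Finset.sum_ite_eq, mul_ite]
  -- entropy of ρ
  have hvρ : vnEntropy ρ = ∑ i, Real.negMulLog (p i) := by
    rw [vnEntropy, dif_pos hρH]
  -- entropy of σ
  have hdiagH : (Matrix.diagonal (fun j => ((q j : ℝ) : ℂ))).IsHermitian := by
    ext i j
    simp only [Matrix.conjTranspose_apply, Matrix.diagonal_apply]
    by_cases h : i = j
    · subst h; simp [Complex.conj_ofReal]
    · rw [if_neg h, if_neg (fun hji => h hji.symm), star_zero]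
  have hσH : σ.IsHermitian := by
    rw [hσspec]
    exact Matrix.isHermitian_mul_mul_conjTranspose U hdiagH
  set W : Matrix (Fin n) (Fin n) ℂ := (hσH.eigenvectorUnitary : Matrix (Fin n) (Fin n) ℂ)
    with hWdef
  set μ : Fin n → ℝ := hσH.eigenvalues with hμdef
  have hW1 : Wᴴ * W = 1 := by
    simpa [Matrix.star_eq_conjTranspose] using Unitary.coe_star_mul_self hσH.eigenvectorUnitary
  have hW2 : W * Wᴴ = 1 := by
    simpa [Matrix.star_eq_conjTranspose] using Unitary.coe_mul_star_self hσH.eigenvectorUnitary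
  have hσspec2 : σ = W * Matrix.diagonal (fun i => (μ i : ℂ)) * Wᴴ := by
    simpa [Matrix.star_eq_conjTranspose, Function.comp_def] using hσH.spectral_theorem
  have hvσ : vnEntropy σ = ∑ j, Real.negMulLog (q j) := by
    rw [vnEntropy, dif_pos hσH]
    exact sum_transfer (fun i => row_sum_normSq (mul_ct_one hW1 hU2) i)
      (fun j => col_sum_normSq (ct_mul_one hW2 hU1) j)
      (fun i j hne0 => intertwine hW1 hU1 (hσspec2.symm.trans hσspec) i j
        (fun h0 => hne0 (by rw [h0, Complex.normSq_zero]))) Real.negMulLog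
  -- the logarithm of the Gibbs weights
  have hlogq : ∀ j, Real.log (q j) = -κ j - Real.log Z := by
    intro j
    simp only [hqdef, hEdef]
    rw [Real.log_div (ne_of_gt (Real.exp_pos _)) (ne_of_gt hZpos), Real.log_exp]
  have hentσ : ∑ j, Real.negMulLog (q j) = (∑ j, q j * κ j) + Real.log Z := by
    calc ∑ j, Real.negMulLog (q j) = ∑ j, (q j * κ j + q j * Real.log Z) := by
          refine Finset.sum_congr rfl fun j _ => ?_
          rw [Real.negMulLog, hlogq j]; ring
      _ = (∑ j, q j * κ j) + ∑ j, q j * Real.log Z := Finset.sum_add_distrib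
      _ = (∑ j, q j * κ j) + Real.log Z := by rw [← Finset.sum_mul, hq1, one_mul]
  have hcp1 : ∑ i, ∑ j, c i j * p i = 1 := by
    calc ∑ i, ∑ j, c i j * p i = ∑ i, p i :=
          Finset.sum_congr rfl fun i _ => by rw [← Finset.sum_mul, hrow i, one_mul]
      _ = 1 := hp1
  have h1 : ∑ i, ∑ j, c i j * p i * Real.log (q j)
      = -(∑ i, ∑ j, p i * κ j * c i j) - Real.log Z := by
    calc ∑ i, ∑ j, c i j * p i * Real.log (q j)
        = ∑ i, ∑ j, (-(p i * κ j * c i j) - c i j * p i * Real.log Z) := by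
          refine Finset.sum_congr rfl fun i _ => Finset.sum_congr rfl fun j _ => ?_
          rw [hlogq j]; ring
      _ = -(∑ i, ∑ j, p i * κ j * c i j) - (∑ i, ∑ j, c i j * p i) * Real.log Z := by
          simp only [Finset.sum_sub_distrib, Finset.sum_neg_distrib, Finset.sum_mul]
      _ = -(∑ i, ∑ j, p i * κ j * c i j) - Real.log Z := by rw [hcp1, one_mul]
  have h2 : ∑ i, ∑ j, c i j * p i * Real.log (p i) = ∑ i, p i * Real.log (p i) := by
    refine Finset.sum_congr rfl fun i _ => ?_
    calc ∑ j, c i j * p i * Real.log (p i)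
        = ∑ j, c i j * (p i * Real.log (p i)) := Finset.sum_congr rfl fun j _ => by ring
      _ = p i * Real.log (p i) := by rw [← Finset.sum_mul, hrow i, one_mul]
  have hnegp : ∑ i, Real.negMulLog (p i) = -∑ i, p i * Real.log (p i) := by
    calc ∑ i, Real.negMulLog (p i) = ∑ i, -(p i * Real.log (p i)) :=
          Finset.sum_congr rfl fun i _ => by rw [Real.negMulLog]; ring
      _ = -∑ i, p i * Real.log (p i) := by rw [Finset.sum_neg_distrib]
  have hA : ∑ i, ∑ j, p i * κ j * c i j = ∑ j, q j * κ j := by rw [← hEρ, hE, hEσ]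
  have hS' : (∑ j, q j * κ j) + Real.log Z ≤ -∑ i, p i * Real.log (p i) := by
    rw [← hentσ, ← hnegp, ← hvσ, ← hvρ]
    exact hS
  have hmain : 0 ≤ ∑ i, ∑ j, c i j * p i * (Real.log (q j) - Real.log (p i)) := by
    have hsplit : ∑ i, ∑ j, c i j * p i * (Real.log (q j) - Real.log (p i))
        = (∑ i, ∑ j, c i j * p i * Real.log (q j))
          - ∑ i, ∑ j, c i j * p i * Real.log (p i) := by
      simp only [← Finset.sum_sub_distrib]
      exact Finset.sum_congr rfl fun i _ => Finset.sum_congr rfl fun j _ => by ring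
    rw [hsplit, h1, h2, hA]
    linarith
  have hkey := klein_scalar hp hq hc hrow hcol hp1 hq1 hmain
  -- conclude equality of the matrices
  have hMD : Matrix.diagonal (fun i => (p i : ℂ)) * M
      = M * Matrix.diagonal (fun j => (q j : ℂ)) := by
    ext i j
    rw [Matrix.diagonal_mul, Matrix.mul_diagonal]
    rcases eq_or_ne (M i j) 0 with h0 | h0
    · rw [h0, mul_zero, zero_mul]
    · have hpq : p i = q j := by
        refine hkey i j fun hcz => h0 ?_
        have : Complex.normSq (M i j) = 0 := hcz
        exact Complex.normSq_eq_zero.mp this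
      rw [hpq, mul_comm]
  have hU_eq : U = V * M := by rw [hMdef, ← Matrix.mul_assoc, hV2, Matrix.one_mul]
  have hfin : (V * M) * Matrix.diagonal (fun j => (q j : ℂ)) * (V * M)ᴴ
      = V * Matrix.diagonal (fun i => (p i : ℂ)) * Vᴴ := by
    rw [Matrix.conjTranspose_mul]
    calc (V * M) * Matrix.diagonal (fun j => (q j : ℂ)) * (Mᴴ * Vᴴ)
        = V * ((M * Matrix.diagonal (fun j => (q j : ℂ))) * Mᴴ) * Vᴴ := by noncomm_ring
      _ = V * ((Matrix.diagonal (fun i => (p i : ℂ)) * M) * Mᴴ) * Vᴴ := by rw [hMD]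
      _ = V * (Matrix.diagonal (fun i => (p i : ℂ)) * (M * Mᴴ)) * Vᴴ := by
          noncomm_ring
      _ = V * Matrix.diagonal (fun i => (p i : ℂ)) * Vᴴ := by
          rw [hM2, Matrix.mul_one]
  rw [hρspec, hσspec, hU_eq, hfin]
end

section
/- (Peierls–Bogoliubov inequality.) Let H and V be Hermitian n×n complex matrices. Then log tr(exp(−(H+V))) ≥ log tr(exp(−H)) − Re tr(exp(−H)·V)/tr(exp(−H)). In particular, tr(exp(−(H+V))) ≥ e^{−‖V‖} tr(exp(−H)). -/
open scoped Matrix ComplexOrder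

/-- The ℓ²→ℓ² operator norm of a complex matrix. -/
noncomputable def opNorm {n : ℕ} (A : Matrix (Fin n) (Fin n) ℂ) : ℝ :=
  ‖Matrix.toEuclideanCLM (𝕜 := ℂ) A‖

open Matrix

lemma exp_neg_hermitian {n : ℕ} {A : Matrix (Fin n) (Fin n) ℂ} (hA : A.IsHermitian) :
    NormedSpace.exp (-A) =
      (hA.eigenvectorUnitary : Matrix (Fin n) (Fin n) ℂ) *
        Matrix.diagonal (fun i => (Real.exp (-hA.eigenvalues i) : ℂ)) *
        star (hA.eigenvectorUnitary : Matrix (Fin n) (Fin n) ℂ) := by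
  set U : Matrix (Fin n) (Fin n) ℂ := (hA.eigenvectorUnitary : Matrix (Fin n) (Fin n) ℂ)
  have hU1 : star U * U = 1 := (Matrix.mem_unitaryGroup_iff'.mp hA.eigenvectorUnitary.2)
  have hU2 : U * star U = 1 := (Matrix.mem_unitaryGroup_iff.mp hA.eigenvectorUnitary.2)
  have hUinv : U⁻¹ = star U := Matrix.inv_eq_left_inv hU1
  have hUu : IsUnit U := Matrix.isUnit_iff_isUnit_det U |>.mpr (Matrix.isUnit_det_of_right_inverse hU2)
  have h1 : -A = U * Matrix.diagonal (fun i => ((-hA.eigenvalues i : ℝ) : ℂ)) * U⁻¹ := by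
    rw [hUinv]
    conv_lhs => rw [hA.spectral_theorem, Unitary.conjStarAlgAut_apply]
    rw [← Matrix.neg_mul, ← Matrix.mul_neg, Matrix.diagonal_neg]
    congr 2
    funext i
    simp [Function.comp]
  rw [h1, Matrix.exp_conj U _ hUu, Matrix.exp_diagonal, hUinv]
  congr 2
  funext i
  rw [Pi.exp_def]
  simp only [← Complex.exp_eq_exp_ℂ, ← Complex.ofReal_exp]

lemma trace_exp_neg {n : ℕ} {A : Matrix (Fin n) (Fin n) ℂ} (hA : A.IsHermitian) :
    (NormedSpace.exp (-A)).trace.re = ∑ i, Real.exp (-hA.eigenvalues i) := by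
  rw [exp_neg_hermitian hA, Matrix.trace_mul_cycle,
    Matrix.mem_unitaryGroup_iff'.mp hA.eigenvectorUnitary.2, one_mul, Matrix.trace_diagonal]
  rw [Complex.re_sum]
  simp [← Complex.ofReal_neg, Complex.exp_ofReal_re]



lemma diag_conj_bound {n : ℕ} (V : Matrix (Fin n) (Fin n) ℂ) (U : Matrix (Fin n) (Fin n) ℂ)
    (hU1 : star U * U = 1) (i : Fin n) :
    |((star U * V * U) i i).re| ≤ opNorm V := by
  set x : EuclideanSpace ℂ (Fin n) := (WithLp.equiv 2 _).symm (fun a => U a i) with hx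
  have hinner : ∀ (M : Matrix (Fin n) (Fin n) ℂ),
      (inner ℂ x ((Matrix.toEuclideanCLM (𝕜 := ℂ) M) x) : ℂ) = (star U * M * U) i i := by
    intro M
    rw [hx, WithLp.equiv_symm_apply, Matrix.toEuclideanCLM_toLp, Matrix.mul_assoc]
    simp [PiLp.inner_apply, RCLike.inner_apply, Matrix.mul_apply, Matrix.toLin'_apply,
      Matrix.mulVec, dotProduct, Matrix.star_apply, Finset.mul_sum]
    exact Finset.sum_congr rfl fun j _ => by
      rw [Finset.sum_mul]; exact Finset.sum_congr rfl fun k _ => by ring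
  have hxnorm : ‖x‖ ^ 2 = 1 := by
    have h1 : (inner ℂ x x : ℂ) = 1 := by
      have := hinner 1
      rwa [_root_.map_one, ContinuousLinearMap.one_apply, Matrix.mul_one, hU1, Matrix.one_apply_eq] at this
    have h2 := inner_self_eq_norm_sq_to_K (𝕜 := ℂ) x
    rw [h1] at h2
    have := congrArg Complex.re h2.symm
    simpa [← Complex.ofReal_pow] using this
  calc |((star U * V * U) i i).re| ≤ ‖(star U * V * U) i i‖ := Complex.abs_re_le_norm _
    _ = ‖(inner ℂ x ((Matrix.toEuclideanCLM (𝕜 := ℂ) V) x) : ℂ)‖ := by rw [hinner]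
    _ ≤ ‖x‖ * ‖(Matrix.toEuclideanCLM (𝕜 := ℂ) V) x‖ := norm_inner_le_norm _ _
    _ ≤ ‖x‖ * (‖Matrix.toEuclideanCLM (𝕜 := ℂ) V‖ * ‖x‖) := by
        gcongr
        exact (Matrix.toEuclideanCLM (𝕜 := ℂ) V).le_opNorm x
    _ = opNorm V * ‖x‖ ^ 2 := by rw [opNorm]; ring
    _ = opNorm V := by rw [hxnorm, mul_one]

/-- Peierls–Bogoliubov inequality:
`log tr(exp(−(H+V))) ≥ log tr(exp(−H)) − Re tr(exp(−H)V)/tr(exp(−H))`, and in particular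
`tr(exp(−(H+V))) ≥ exp(−‖V‖) tr(exp(−H))`. -/
theorem peierls_bogoliubov {n : ℕ} (hn : 0 < n)
    (H V : Matrix (Fin n) (Fin n) ℂ) (hH : H.IsHermitian) (hV : V.IsHermitian) :
    Real.log ((NormedSpace.exp (-H)).trace).re -
        ((NormedSpace.exp (-H) * V).trace).re / ((NormedSpace.exp (-H)).trace).re ≤
      Real.log ((NormedSpace.exp (-(H + V))).trace).re ∧
    Real.exp (-opNorm V) * ((NormedSpace.exp (-H)).trace).re ≤
      ((NormedSpace.exp (-(H + V))).trace).re := by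
  classical
  have : Nonempty (Fin n) := ⟨⟨0, hn⟩⟩
  set U : Matrix (Fin n) (Fin n) ℂ := (hH.eigenvectorUnitary : Matrix (Fin n) (Fin n) ℂ) with hUdef
  have hU1 : star U * U = 1 := (Matrix.mem_unitaryGroup_iff'.mp hH.eigenvectorUnitary.2)
  have hU2 : U * star U = 1 := (Matrix.mem_unitaryGroup_iff.mp hH.eigenvectorUnitary.2)
  have hW : (H + V).IsHermitian := hH.add hV
  set Ψ : Matrix (Fin n) (Fin n) ℂ := (hW.eigenvectorUnitary : Matrix (Fin n) (Fin n) ℂ) with hPdef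
  have hP1 : star Ψ * Ψ = 1 := (Matrix.mem_unitaryGroup_iff'.mp hW.eigenvectorUnitary.2)
  have hP2 : Ψ * star Ψ = 1 := (Matrix.mem_unitaryGroup_iff.mp hW.eigenvectorUnitary.2)
  set lam : Fin n → ℝ := hH.eigenvalues with hlam
  set mu : Fin n → ℝ := hW.eigenvalues with hmu
  set Q : Matrix (Fin n) (Fin n) ℂ := star U * Ψ with hQdef
  have hsQ : star Q = star Ψ * U := by
    rw [hQdef, Matrix.star_mul, star_star]
  have hQ1 : Q * star Q = 1 := by
    rw [hQdef, hsQ, Matrix.mul_assoc, ← Matrix.mul_assoc Ψ, hP2, Matrix.one_mul, hU1]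
  have hQ2 : star Q * Q = 1 := by
    rw [hQdef, hsQ, Matrix.mul_assoc, ← Matrix.mul_assoc U, hU2, Matrix.one_mul, hP1]
  set w : Fin n → Fin n → ℝ := fun i j => Complex.normSq (Q i j) with hwdef
  have hw0 : ∀ i j, 0 ≤ w i j := fun i j => Complex.normSq_nonneg _
  have hrow : ∀ i, ∑ j, w i j = 1 := by
    intro i
    have := congrArg (fun M => (M i i).re) hQ1
    simpa [Matrix.mul_apply, Matrix.star_apply, Complex.re_sum, Complex.mul_conj,
      Matrix.one_apply] using this
  have hcol : ∀ j, ∑ i, w i j = 1 := by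
    intro j
    have := congrArg (fun M => (M j j).re) hQ2
    simpa [Matrix.mul_apply, Matrix.star_apply, Complex.re_sum, mul_comm, Complex.mul_conj,
      Matrix.one_apply] using this
  set v : Fin n → ℝ := fun i => ((star U * V * U) i i).re with hvdef
  have hkey : ∀ i, lam i + v i = ∑ j, w i j * mu j := by
    have e1 : star U * (H + V) * U = Q * Matrix.diagonal (fun j => ((mu j : ℝ) : ℂ)) * star Q := by
      conv_lhs => rw [hW.spectral_theorem, Unitary.conjStarAlgAut_apply]
      rw [hQdef, hsQ]
      simp only [Matrix.mul_assoc]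
      rfl
    have e2 : star U * (H + V) * U
        = Matrix.diagonal (fun i => ((lam i : ℝ) : ℂ)) + star U * V * U := by
      have hd : star U * H * U = diagonal (RCLike.ofReal ∘ hH.eigenvalues) :=
        (Unitary.conjStarAlgAut_star_apply (S := ℂ) hH.eigenvectorUnitary H).symm.trans
          hH.conjStarAlgAut_star_eigenvectorUnitary
      rw [Matrix.mul_add, Matrix.add_mul, hd]
      rfl
    intro i
    have lhs_eq : ((star U * (H + V) * U) i i).re = lam i + v i := by
      rw [e2]
      simp [Matrix.add_apply, Matrix.diagonal_apply_eq, hvdef]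
    have rhs_eq : ((star U * (H + V) * U) i i).re = ∑ j, w i j * mu j := by
      rw [e1, Matrix.mul_apply, Complex.re_sum]
      refine Finset.sum_congr rfl fun j _ => ?_
      rw [Matrix.mul_diagonal, Matrix.star_apply, Complex.star_def, mul_comm (Q i j),
        mul_assoc, Complex.mul_conj, ← Complex.ofReal_mul, Complex.ofReal_re, mul_comm]
    rw [← lhs_eq, rhs_eq]
  have hZ : ((NormedSpace.exp (-H)).trace).re = ∑ i, Real.exp (-lam i) := trace_exp_neg hH
  have hT : ((NormedSpace.exp (-(H + V))).trace).re = ∑ j, Real.exp (-mu j) := trace_exp_neg hW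
  have hS : ((NormedSpace.exp (-H) * V).trace).re = ∑ i, Real.exp (-lam i) * v i := by
    rw [exp_neg_hermitian hH, Matrix.mul_assoc (U * _), Matrix.trace_mul_comm,
      ← Matrix.mul_assoc]
    simp only [Matrix.trace, Matrix.diag]
    rw [Complex.re_sum]
    refine Finset.sum_congr rfl fun i _ => ?_
    rw [Matrix.mul_diagonal]
    simp only [Complex.mul_re, Complex.ofReal_re, Complex.ofReal_im, mul_zero, sub_zero]
    exact mul_comm _ _
  set Z : ℝ := ∑ i, Real.exp (-lam i) with hZdef
  set T : ℝ := ∑ j, Real.exp (-mu j) with hTdef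
  set S : ℝ := ∑ i, Real.exp (-lam i) * v i with hSdef
  have hZpos : 0 < Z := Finset.sum_pos (fun i _ => Real.exp_pos _) Finset.univ_nonempty
  have hTpos : 0 < T := Finset.sum_pos (fun i _ => Real.exp_pos _) Finset.univ_nonempty
  have peierls : ∑ i, Real.exp (-(lam i + v i)) ≤ T := by
    have h1 : ∀ i, Real.exp (-(lam i + v i)) ≤ ∑ j, w i j * Real.exp (-mu j) := by
      intro i
      have hjen := convexOn_exp.map_sum_le (t := Finset.univ) (w := w i) (p := fun j => -mu j)
        (fun j _ => hw0 i j) (hrow i) (fun j _ => Set.mem_univ _)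
      simp only [smul_eq_mul] at hjen
      have e0 : -(lam i + v i) = ∑ j, w i j * (-mu j) := by
        rw [hkey i, ← Finset.sum_neg_distrib]
        exact Finset.sum_congr rfl fun j _ => by ring
      rw [e0]
      exact hjen
    calc ∑ i, Real.exp (-(lam i + v i)) ≤ ∑ i, ∑ j, w i j * Real.exp (-mu j) :=
          Finset.sum_le_sum fun i _ => h1 i
      _ = ∑ j, (∑ i, w i j) * Real.exp (-mu j) := by
          rw [Finset.sum_comm]; exact Finset.sum_congr rfl fun j _ => (Finset.sum_mul _ _ _).symm
      _ = T := by simp [hcol, hTdef]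
  have jensen : Z * Real.exp (-(S / Z)) ≤ ∑ i, Real.exp (-(lam i + v i)) := by
    have hsum : ∑ i, Real.exp (-lam i) / Z = 1 := by
      rw [← Finset.sum_div, ← hZdef, div_self hZpos.ne']
    have hjen := convexOn_exp.map_sum_le (t := Finset.univ) (w := fun i => Real.exp (-lam i) / Z)
      (p := fun i => -v i) (fun i _ => by positivity) hsum (fun i _ => Set.mem_univ _)
    simp only [smul_eq_mul] at hjen
    have e1 : ∑ i, Real.exp (-lam i) / Z * (-v i) = -(S / Z) := by
      rw [hSdef, Finset.sum_div, ← Finset.sum_neg_distrib]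
      exact Finset.sum_congr rfl fun i _ => by ring
    rw [e1] at hjen
    calc Z * Real.exp (-(S / Z)) ≤ Z * ∑ i, Real.exp (-lam i) / Z * Real.exp (-v i) :=
          mul_le_mul_of_nonneg_left hjen hZpos.le
      _ = ∑ i, Real.exp (-(lam i + v i)) := by
          rw [Finset.mul_sum]
          refine Finset.sum_congr rfl fun i _ => ?_
          rw [neg_add, Real.exp_add]
          field_simp
          try ring
  have central : Z * Real.exp (-(S / Z)) ≤ T := jensen.trans peierls
  have hvbound : ∀ i, |v i| ≤ opNorm V := fun i => diag_conj_bound V U hU1 i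
  have hSbound : S ≤ Z * opNorm V := by
    rw [hZdef, Finset.sum_mul, hSdef]
    exact Finset.sum_le_sum fun i _ =>
      mul_le_mul_of_nonneg_left (abs_le.mp (hvbound i)).2 (Real.exp_pos _).le
  constructor
  · rw [hZ, hT, hS]
    have hlog := Real.log_le_log (by positivity) central
    rw [Real.log_mul hZpos.ne' (Real.exp_pos _).ne', Real.log_exp] at hlog
    linarith
  · rw [hZ, hT]
    have h2 : Z * Real.exp (-opNorm V) ≤ Z * Real.exp (-(S / Z)) := by
      apply mul_le_mul_of_nonneg_left _ hZpos.le
      apply Real.exp_le_exp.mpr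
      rw [neg_le_neg_iff]
      exact (div_le_iff₀ hZpos).mpr (by linarith [hSbound])
    linarith [h2.trans central]
end

section
/- Let H and K be Hermitian n×n complex matrices, c ∈ ℝ and δ ≥ 0, and suppose (c−δ)·I ≤ H − K ≤ (c+δ)·I in the Loewner order. Then ‖(−H − log tr(exp(−H))·I) − (−K − log tr(exp(−K))·I)‖ ≤ 2δ; equivalently, the logarithms of the two normalized Gibbs density matrices exp(−H)/tr(exp(−H)) and exp(−K)/tr(exp(−K)) differ in operator norm by at most 2δ. (The estimate ‖log ω^c_{Φ,Λ} − log ω^c_{Ψ,Λ}‖ ≤ 2δ|Λ| from the proof of Proposition prop:weakGibbs_are_eq (4).) -/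
open scoped Matrix ComplexOrder

namespace GibbsAux

open Matrix

variable {n : ℕ}

lemma exp_eq {A : Matrix (Fin n) (Fin n) ℂ} (hA : A.IsHermitian) :
    NormedSpace.exp A = (hA.eigenvectorUnitary : Matrix (Fin n) (Fin n) ℂ)
      * Matrix.diagonal (fun i => Complex.exp (hA.eigenvalues i))
      * star (hA.eigenvectorUnitary : Matrix (Fin n) (Fin n) ℂ) := by
  set U : Matrix (Fin n) (Fin n) ℂ := (hA.eigenvectorUnitary : Matrix (Fin n) (Fin n) ℂ) with hU
  have hUU : U * star U = 1 := Matrix.mem_unitaryGroup_iff.mp hA.eigenvectorUnitary.2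
  have hsUU : star U * U = 1 := Matrix.mem_unitaryGroup_iff'.mp hA.eigenvectorUnitary.2
  have hinv : U⁻¹ = star U := Matrix.inv_eq_right_inv hUU
  have hUnit : IsUnit U := ⟨⟨U, star U, hUU, hsUU⟩, rfl⟩
  have h2 : NormedSpace.exp (U * Matrix.diagonal (RCLike.ofReal ∘ hA.eigenvalues) * U⁻¹)
      = U * NormedSpace.exp (Matrix.diagonal (RCLike.ofReal ∘ hA.eigenvalues)) * U⁻¹ :=
    Matrix.exp_conj _ _ hUnit
  conv_lhs => rw [hA.spectral_theorem, Unitary.conjStarAlgAut_apply, ← hU, ← hinv]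
  rw [h2, Matrix.exp_diagonal, hinv]
  have h3 : NormedSpace.exp ((RCLike.ofReal : ℝ → ℂ) ∘ hA.eigenvalues)
      = fun i => Complex.exp (hA.eigenvalues i) := by
    funext i
    rw [Pi.coe_exp]
    simp [Complex.exp_eq_exp_ℂ]
  rw [h3]

lemma trace_exp_re_eq {A : Matrix (Fin n) (Fin n) ℂ} (hA : A.IsHermitian) :
    ((NormedSpace.exp A).trace).re = ∑ i, Real.exp (hA.eigenvalues i) := by
  rw [exp_eq hA, Matrix.trace_mul_cycle,
    Matrix.mem_unitaryGroup_iff'.mp hA.eigenvectorUnitary.2, one_mul, Matrix.trace_diagonal]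
  rw [Complex.re_sum]
  exact Finset.sum_congr rfl fun i _ => by simp [← Complex.ofReal_exp]

lemma trace_exp_re_pos (hn : 0 < n) {A : Matrix (Fin n) (Fin n) ℂ} (hA : A.IsHermitian) :
    0 < ((NormedSpace.exp A).trace).re := by
  rw [trace_exp_re_eq hA]
  have : Nonempty (Fin n) := Fin.pos_iff_nonempty.mp hn
  exact Finset.sum_pos (fun i _ => Real.exp_pos _) Finset.univ_nonempty

/-- diagonal entries of a PSD matrix have nonneg real part -/
lemma re_diag_nonneg {A : Matrix (Fin n) (Fin n) ℂ} (hA : A.PosSemidef) (i : Fin n) :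
    0 ≤ (A i i).re := by
  have := hA.re_dotProduct_nonneg (Pi.single i 1)
  simpa [dotProduct, Matrix.mulVec_single, Pi.single_apply, Finset.sum_ite_eq,
    apply_ite] using this

/-- Peierls inequality for diagonal entries: for Hermitian `M`,
`exp (re (M i i)) ≤ re ((exp M) i i)`. -/
lemma peierls {M : Matrix (Fin n) (Fin n) ℂ} (hM : M.IsHermitian) (i : Fin n) :
    Real.exp ((M i i).re) ≤ ((NormedSpace.exp M) i i).re := by
  set U : Matrix (Fin n) (Fin n) ℂ := (hM.eigenvectorUnitary : Matrix (Fin n) (Fin n) ℂ) with hU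
  have hUU : U * star U = 1 := Matrix.mem_unitaryGroup_iff.mp hM.eigenvectorUnitary.2
  set w : Fin n → ℝ := fun j => Complex.normSq (U i j) with hw
  set lam : Fin n → ℝ := fun j => hM.eigenvalues j with hlam
  have hwsum : ∑ j, w j = 1 := by
    have h1 : (U * star U) i i = 1 := by rw [hUU]; simp
    have : (∑ j, (w j : ℂ)) = 1 := by
      rw [← h1, Matrix.mul_apply]
      congr 1; funext j
      simp [hw, Matrix.star_apply, Complex.mul_conj]
    exact_mod_cast congrArg Complex.re this
  -- diagonal entry formulas
  have hdiag : ∀ (d : Fin n → ℝ),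
      ((U * Matrix.diagonal (fun j => (d j : ℂ)) * star U) i i).re = ∑ j, w j * d j := by
    intro d
    rw [Matrix.mul_apply]
    rw [Complex.re_sum]
    congr 1; funext j
    rw [Matrix.mul_apply]
    rw [Finset.sum_eq_single j
      (by intro b _ hb; rw [Matrix.diagonal_apply_ne _ hb, mul_zero])
      (by intro hj; exact absurd (Finset.mem_univ j) hj)]
    simp only [Matrix.diagonal_apply_eq, Matrix.star_apply, RCLike.star_def]
    have : U i j * (d j : ℂ) * (starRingEnd ℂ) (U i j)
        = (w j : ℂ) * (d j : ℂ) := by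
      rw [hw]; push_cast; rw [← Complex.mul_conj]; ring
    rw [this]
    simp
  have hMii : (M i i).re = ∑ j, w j * lam j := by
    have := hdiag lam
    rw [← this]
    congr 2
    conv_lhs => rw [hM.spectral_theorem, Unitary.conjStarAlgAut_apply]
    rfl
  have hexpii : ((NormedSpace.exp M) i i).re = ∑ j, w j * Real.exp (lam j) := by
    have h2 : (fun j => (Complex.exp (hM.eigenvalues j))) =
        (fun j => ((Real.exp (lam j) : ℝ) : ℂ)) := by
      funext j; rw [← Complex.ofReal_exp]
    rw [exp_eq hM, ← hU, h2, hdiag]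
  rw [hMii, hexpii]
  have := convexOn_exp.map_sum_le (t := Finset.univ) (w := w) (p := lam)
    (fun j _ => Complex.normSq_nonneg _) hwsum (fun j _ => Set.mem_univ _)
  simpa [smul_eq_mul] using this

/-- monotonicity of `re ∘ trace ∘ exp` in the Loewner order. -/
lemma trace_exp_mono {A B : Matrix (Fin n) (Fin n) ℂ} (hA : A.IsHermitian)
    (hB : B.IsHermitian) (h : (B - A).PosSemidef) :
    ((NormedSpace.exp A).trace).re ≤ ((NormedSpace.exp B).trace).re := by
  set U : Matrix (Fin n) (Fin n) ℂ := (hA.eigenvectorUnitary : Matrix (Fin n) (Fin n) ℂ) with hU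
  have hUU : U * star U = 1 := Matrix.mem_unitaryGroup_iff.mp hA.eigenvectorUnitary.2
  have hsUU : star U * U = 1 := Matrix.mem_unitaryGroup_iff'.mp hA.eigenvectorUnitary.2
  set M : Matrix (Fin n) (Fin n) ℂ := star U * B * U with hMdef
  have hM : M.IsHermitian := by
    rw [hMdef, Matrix.star_eq_conjTranspose]
    exact Matrix.isHermitian_conjTranspose_mul_mul U hB
  -- diagonal entries dominate eigenvalues of A
  have hdom : ∀ i, hA.eigenvalues i ≤ (M i i).re := by
    intro i
    have hpsd : (M - Matrix.diagonal (RCLike.ofReal ∘ hA.eigenvalues)).PosSemidef := by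
      have h0 := h.conjTranspose_mul_mul_same U
      have heq : Uᴴ * (B - A) * U = M - Matrix.diagonal (RCLike.ofReal ∘ hA.eigenvalues) := by
        rw [← Matrix.star_eq_conjTranspose, Matrix.mul_sub, Matrix.sub_mul, hMdef]
        congr 1
        rw [← hA.conjStarAlgAut_star_eigenvectorUnitary, Unitary.conjStarAlgAut_star_apply, hU]
      rw [heq] at h0
      exact h0
    have := re_diag_nonneg hpsd i
    have hd : ((Matrix.diagonal ((RCLike.ofReal : ℝ → ℂ) ∘ hA.eigenvalues)) i i).re
        = hA.eigenvalues i := by simp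
    simp only [Matrix.sub_apply, Complex.sub_re, hd] at this
    linarith
  -- conjugation invariance of trace of exp
  have htr : ((NormedSpace.exp M).trace) = ((NormedSpace.exp B).trace) := by
    have hinv : (star U)⁻¹ = U := Matrix.inv_eq_right_inv hsUU
    have hUnit : IsUnit (star U) := ⟨⟨star U, U, hsUU, hUU⟩, rfl⟩
    have : M = star U * B * (star U)⁻¹ := by rw [hinv]
    rw [this, Matrix.exp_conj _ _ hUnit, hinv, Matrix.trace_mul_cycle, hUU, one_mul]
  calc ((NormedSpace.exp A).trace).re = ∑ i, Real.exp (hA.eigenvalues i) :=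
        trace_exp_re_eq hA
    _ ≤ ∑ i, Real.exp ((M i i).re) := by
        apply Finset.sum_le_sum; intro i _; exact Real.exp_le_exp.mpr (hdom i)
    _ ≤ ∑ i, ((NormedSpace.exp M) i i).re := by
        apply Finset.sum_le_sum; intro i _; exact peierls hM i
    _ = ((NormedSpace.exp M).trace).re := by rw [Matrix.trace]; rw [Complex.re_sum]; rfl
    _ = ((NormedSpace.exp B).trace).re := by rw [htr]

lemma smul_one_hermitian (x : ℝ) :
    (((x : ℝ) : ℂ) • (1 : Matrix (Fin n) (Fin n) ℂ)).IsHermitian := by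
  rw [Matrix.smul_one_eq_diagonal]
  exact Matrix.isHermitian_diagonal_of_self_adjoint _
    (by funext j; simp [Pi.star_apply, Complex.conj_ofReal])

lemma smul_one_posSemidef {x : ℝ} (hx : 0 ≤ x) :
    (((x : ℝ) : ℂ) • (1 : Matrix (Fin n) (Fin n) ℂ)).PosSemidef := by
  rw [Matrix.smul_one_eq_diagonal]
  exact Matrix.posSemidef_diagonal_iff.mpr fun i => Complex.zero_le_real.mpr hx

lemma trace_exp_add_smul_one (A : Matrix (Fin n) (Fin n) ℂ) (s : ℝ) :
    ((NormedSpace.exp (A + ((s : ℝ) : ℂ) • 1)).trace).re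
      = Real.exp s * ((NormedSpace.exp A).trace).re := by
  have hc : Commute A (((s : ℝ) : ℂ) • (1 : Matrix (Fin n) (Fin n) ℂ)) :=
    (Commute.one_right A).smul_right _
  rw [Matrix.exp_add_of_commute A _ hc]
  have h1 : NormedSpace.exp (((s : ℝ) : ℂ) • (1 : Matrix (Fin n) (Fin n) ℂ))
      = Complex.exp s • (1 : Matrix (Fin n) (Fin n) ℂ) := by
    rw [Matrix.smul_one_eq_diagonal, Matrix.exp_diagonal]
    have : NormedSpace.exp (fun _ : Fin n => ((s : ℝ) : ℂ)) = fun _ : Fin n => Complex.exp s := by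
      funext j; rw [Pi.coe_exp]; simp [Complex.exp_eq_exp_ℂ]
    rw [this, ← Matrix.smul_one_eq_diagonal]
  rw [h1, mul_smul_comm, mul_one, Matrix.trace_smul, ← Complex.ofReal_exp, smul_eq_mul,
    Complex.re_ofReal_mul]

lemma eig_le {M : Matrix (Fin n) (Fin n) ℂ} (hM : M.IsHermitian) {a : ℝ}
    (h : (((a : ℝ) : ℂ) • (1 : Matrix (Fin n) (Fin n) ℂ) - M).PosSemidef) (i : Fin n) :
    hM.eigenvalues i ≤ a := by
  set v : Fin n → ℂ := (WithLp.equiv 2 _) (hM.eigenvectorBasis i) with hv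
  have h0 := h.re_dotProduct_nonneg v
  have hvv : (star v ⬝ᵥ v) = 1 := by
    have h2 : (inner ℂ (hM.eigenvectorBasis i) (hM.eigenvectorBasis i) : ℂ) = star v ⬝ᵥ v := by
      rw [EuclideanSpace.inner_eq_star_dotProduct, dotProduct_comm]; rfl
    rw [← h2, inner_self_eq_norm_sq_to_K, hM.eigenvectorBasis.orthonormal.1 i]
    norm_num
  rw [Matrix.sub_mulVec, dotProduct_sub, Matrix.smul_mulVec, Matrix.one_mulVec,
    dotProduct_smul, smul_eq_mul, hvv, mul_one, map_sub] at h0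
  have hval := hM.eigenvalues_eq i
  change hM.eigenvalues i = RCLike.re (star v ⬝ᵥ M *ᵥ v) at hval
  have ha' : RCLike.re ((a : ℂ)) = a := by simp
  rw [← hval, ha'] at h0
  linarith

lemma eig_ge {M : Matrix (Fin n) (Fin n) ℂ} (hM : M.IsHermitian) {a : ℝ}
    (h : (M - ((a : ℝ) : ℂ) • (1 : Matrix (Fin n) (Fin n) ℂ)).PosSemidef) (i : Fin n) :
    a ≤ hM.eigenvalues i := by
  set v : Fin n → ℂ := (WithLp.equiv 2 _) (hM.eigenvectorBasis i) with hv
  have h0 := h.re_dotProduct_nonneg v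
  have hvv : (star v ⬝ᵥ v) = 1 := by
    have h2 : (inner ℂ (hM.eigenvectorBasis i) (hM.eigenvectorBasis i) : ℂ) = star v ⬝ᵥ v := by
      rw [EuclideanSpace.inner_eq_star_dotProduct, dotProduct_comm]; rfl
    rw [← h2, inner_self_eq_norm_sq_to_K, hM.eigenvectorBasis.orthonormal.1 i]
    norm_num
  rw [Matrix.sub_mulVec, dotProduct_sub, Matrix.smul_mulVec, Matrix.one_mulVec,
    dotProduct_smul, smul_eq_mul, hvv, mul_one, map_sub] at h0
  have hval := hM.eigenvalues_eq i
  change hM.eigenvalues i = RCLike.re (star v ⬝ᵥ M *ᵥ v) at hval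
  have ha' : RCLike.re ((a : ℂ)) = a := by simp
  rw [← hval, ha'] at h0
  linarith

lemma opNorm_le_of_eig {M : Matrix (Fin n) (Fin n) ℂ} (hM : M.IsHermitian) {a : ℝ}
    (ha : 0 ≤ a) (hb : ∀ i, |hM.eigenvalues i| ≤ a) : opNorm M ≤ a := by
  rw [opNorm]
  apply ContinuousLinearMap.opNorm_le_bound _ ha
  intro x
  set T := Matrix.toEuclideanCLM (𝕜 := ℂ) M with hT
  set b := hM.eigenvectorBasis with hbb
  have hsym := Matrix.isHermitian_iff_isSymmetric.mp hM
  have hTb : ∀ i, T (b i) = ((hM.eigenvalues i : ℝ) : ℂ) • b i := by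
    intro i
    apply (WithLp.equiv 2 _).injective
    simp only [WithLp.equiv_apply]
    rw [Matrix.ofLp_toEuclideanCLM]
    rw [hM.mulVec_eigenvectorBasis i]
    rw [RCLike.real_smul_eq_coe_smul (K := ℂ)]
    rfl
  have hrepr : ∀ i, b.repr (T x) i = ((hM.eigenvalues i : ℝ) : ℂ) * b.repr x i := by
    intro i
    rw [b.repr_apply_apply, b.repr_apply_apply]
    have hTlin : ∀ y, T y = Matrix.toEuclideanLin M y := by
      intro y
      rw [← Matrix.coe_toEuclideanCLM_eq_toEuclideanLin]
      rfl
    have h1 : (inner ℂ (b i) (T x) : ℂ) = inner ℂ (T (b i)) x := by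
      rw [hTlin, hTlin]
      exact (hsym (b i) x).symm
    rw [h1, hTb i, inner_smul_left, Complex.conj_ofReal]
  have hnTx : ‖T x‖ = ‖b.repr (T x)‖ := (b.repr.norm_map (T x)).symm
  have hnx : ‖x‖ = ‖b.repr x‖ := (b.repr.norm_map x).symm
  rw [hnTx, hnx, EuclideanSpace.norm_eq, EuclideanSpace.norm_eq]
  rw [show a * Real.sqrt (∑ i, ‖b.repr x i‖ ^ 2)
      = Real.sqrt (a ^ 2 * ∑ i, ‖b.repr x i‖ ^ 2) by
    rw [Real.sqrt_mul (sq_nonneg a), Real.sqrt_sq ha]]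
  apply Real.sqrt_le_sqrt
  rw [Finset.mul_sum]
  apply Finset.sum_le_sum
  intro i _
  rw [hrepr i, norm_mul, Complex.norm_real, Real.norm_eq_abs, mul_pow]
  have h2 : |hM.eigenvalues i| ^ 2 ≤ a ^ 2 := by
    have := hb i
    nlinarith [abs_nonneg (hM.eigenvalues i)]
  nlinarith [sq_nonneg (‖b.repr x i‖), norm_nonneg (b.repr x i)]

end GibbsAux

/-- If `(c−δ)·I ≤ H − K ≤ (c+δ)·I` in the Loewner order (for Hermitian `H, K`), then the
logarithms of the normalized Gibbs density matrices, `−H − log tr(exp(−H))·I` and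
`−K − log tr(exp(−K))·I`, differ in operator norm by at most `2δ`. -/
theorem log_gibbs_density_estimate_of_loewner {n : ℕ} (hn : 0 < n)
    (H K : Matrix (Fin n) (Fin n) ℂ) (hH : H.IsHermitian) (hK : K.IsHermitian)
    (c δ : ℝ) (hδ : 0 ≤ δ)
    (hlow : ((H - K) - ((c - δ : ℝ) : ℂ) • (1 : Matrix (Fin n) (Fin n) ℂ)).PosSemidef)
    (hup : (((c + δ : ℝ) : ℂ) • (1 : Matrix (Fin n) (Fin n) ℂ) - (H - K)).PosSemidef) :
    opNorm ((-H - (Real.log ((NormedSpace.exp (-H)).trace).re : ℂ) •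
          (1 : Matrix (Fin n) (Fin n) ℂ)) -
        (-K - (Real.log ((NormedSpace.exp (-K)).trace).re : ℂ) •
          (1 : Matrix (Fin n) (Fin n) ℂ))) ≤ 2 * δ := by
  classical
  set ZH : ℝ := ((NormedSpace.exp (-H)).trace).re with hZHdef
  set ZK : ℝ := ((NormedSpace.exp (-K)).trace).re with hZKdef
  have hZH : 0 < ZH := GibbsAux.trace_exp_re_pos hn hH.neg
  have hZK : 0 < ZK := GibbsAux.trace_exp_re_pos hn hK.neg
  -- upper bound on ZH
  have hB1 : (-K - ((c - δ : ℝ) : ℂ) • (1 : Matrix (Fin n) (Fin n) ℂ)).IsHermitian :=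
    hK.neg.sub (GibbsAux.smul_one_hermitian _)
  have h1 : ZH ≤ ((NormedSpace.exp (-K - ((c - δ : ℝ) : ℂ) • 1)).trace).re := by
    apply GibbsAux.trace_exp_mono hH.neg hB1
    have e1 : (-K - ((c - δ : ℝ) : ℂ) • (1 : Matrix (Fin n) (Fin n) ℂ)) - (-H)
        = (H - K) - ((c - δ : ℝ) : ℂ) • 1 := by abel
    rw [e1]; exact hlow
  have e2 : -K - ((c - δ : ℝ) : ℂ) • (1 : Matrix (Fin n) (Fin n) ℂ)
      = -K + (((-(c - δ) : ℝ)) : ℂ) • 1 := by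
    rw [Complex.ofReal_neg, neg_smul]; abel
  rw [e2, GibbsAux.trace_exp_add_smul_one] at h1
  -- lower bound on ZH
  have hB2 : (-K - ((c + δ : ℝ) : ℂ) • (1 : Matrix (Fin n) (Fin n) ℂ)).IsHermitian :=
    hK.neg.sub (GibbsAux.smul_one_hermitian _)
  have h2 : ((NormedSpace.exp (-K - ((c + δ : ℝ) : ℂ) • 1)).trace).re ≤ ZH := by
    apply GibbsAux.trace_exp_mono hB2 hH.neg
    have e1 : (-H) - (-K - ((c + δ : ℝ) : ℂ) • (1 : Matrix (Fin n) (Fin n) ℂ))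
        = ((c + δ : ℝ) : ℂ) • 1 - (H - K) := by abel
    rw [e1]; exact hup
  have e3 : -K - ((c + δ : ℝ) : ℂ) • (1 : Matrix (Fin n) (Fin n) ℂ)
      = -K + (((-(c + δ) : ℝ)) : ℂ) • 1 := by
    rw [Complex.ofReal_neg, neg_smul]; abel
  rw [e3, GibbsAux.trace_exp_add_smul_one] at h2
  -- log bounds
  have l1 : Real.log ZH ≤ -(c - δ) + Real.log ZK := by
    have := Real.log_le_log hZH h1
    rwa [Real.log_mul (Real.exp_pos _).ne' hZK.ne', Real.log_exp] at this
  have l2 : -(c + δ) + Real.log ZK ≤ Real.log ZH := by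
    have := Real.log_le_log (mul_pos (Real.exp_pos _) hZK) h2
    rwa [Real.log_mul (Real.exp_pos _).ne' hZK.ne', Real.log_exp] at this
  set r : ℝ := Real.log ZH - Real.log ZK with hrdef
  have eX : (-H - ((Real.log ZH : ℝ) : ℂ) • (1 : Matrix (Fin n) (Fin n) ℂ))
        - (-K - ((Real.log ZK : ℝ) : ℂ) • (1 : Matrix (Fin n) (Fin n) ℂ))
      = -(H - K) - ((r : ℝ) : ℂ) • 1 := by
    rw [show ((r : ℝ) : ℂ) = ((Real.log ZH : ℝ) : ℂ) - ((Real.log ZK : ℝ) : ℂ) by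
      rw [hrdef]; push_cast; ring, sub_smul]
    abel
  rw [eX]
  have hX : (-(H - K) - ((r : ℝ) : ℂ) • (1 : Matrix (Fin n) (Fin n) ℂ)).IsHermitian :=
    (hH.sub hK).neg.sub (GibbsAux.smul_one_hermitian _)
  have P1 : (((2 * δ : ℝ) : ℂ) • (1 : Matrix (Fin n) (Fin n) ℂ)
      - (-(H - K) - ((r : ℝ) : ℂ) • 1)).PosSemidef := by
    have heq : ((2 * δ : ℝ) : ℂ) • (1 : Matrix (Fin n) (Fin n) ℂ)
        - (-(H - K) - ((r : ℝ) : ℂ) • 1)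
        = ((H - K) - ((c - δ : ℝ) : ℂ) • 1) + (((r + c + δ : ℝ)) : ℂ) • 1 := by
      push_cast; module
    rw [heq]
    exact hlow.add (GibbsAux.smul_one_posSemidef (by linarith))
  have P2 : ((-(H - K) - ((r : ℝ) : ℂ) • (1 : Matrix (Fin n) (Fin n) ℂ))
      - (((-(2 * δ) : ℝ)) : ℂ) • 1).PosSemidef := by
    have heq : (-(H - K) - ((r : ℝ) : ℂ) • (1 : Matrix (Fin n) (Fin n) ℂ))
        - (((-(2 * δ) : ℝ)) : ℂ) • 1
        = (((c + δ : ℝ) : ℂ) • 1 - (H - K)) + (((δ - c - r : ℝ)) : ℂ) • 1 := by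
      push_cast; module
    rw [heq]
    exact hup.add (GibbsAux.smul_one_posSemidef (by linarith))
  apply GibbsAux.opNorm_le_of_eig hX (by linarith)
  intro i
  rw [abs_le]
  exact ⟨GibbsAux.eig_ge hX (a := -(2 * δ)) P2 i, GibbsAux.eig_le hX P1 i⟩
end

section
/- Let H and W be Hermitian n×n complex matrices, and let σ = exp(−(H+W))/tr(exp(−(H+W))) and τ = exp(−H)/tr(exp(−H)) be the corresponding Gibbs density matrices. Then ‖log σ − log τ‖ ≤ 2‖W‖. (Finite-dimensional form of the Hiai–Petz estimate underlying Proposition mil-la (1): perturbing the Hamiltonian by a surface energy W changes the logarithm of the Gibbs density by at most 2‖W‖ in operator norm.) -/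
open scoped Matrix ComplexOrder

/-- The logarithm of a Hermitian matrix, obtained by applying the real logarithm to the
eigenvalues in a spectral decomposition (and junk value `0` otherwise). -/
noncomputable def matLog {n : ℕ} (A : Matrix (Fin n) (Fin n) ℂ) : Matrix (Fin n) (Fin n) ℂ :=
  if h : A.IsHermitian then
    (h.eigenvectorUnitary : Matrix (Fin n) (Fin n) ℂ) *
      Matrix.diagonal (fun i => (Real.log (h.eigenvalues i) : ℂ)) *
      (star (h.eigenvectorUnitary : Matrix (Fin n) (Fin n) ℂ))
  else 0

namespace HP

open Matrix

-- entries of conjugated diagonal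
lemma conj_diag_entry {n : ℕ} (Wm : Matrix (Fin n) (Fin n) ℂ) (d : Fin n → ℝ) (i : Fin n) :
    ((Wm * Matrix.diagonal (fun j => (d j : ℂ)) * star Wm) i i).re
      = ∑ j, Complex.normSq (Wm i j) * d j := by
  have key : ∀ (z : ℂ) (r : ℝ), (z * r * (starRingEnd ℂ) z).re = Complex.normSq z * r := by
    intro z r
    rw [mul_right_comm, Complex.mul_conj, ← Complex.ofReal_mul, Complex.ofReal_re]
  rw [Matrix.mul_apply]
  simp only [Matrix.mul_diagonal, Matrix.star_apply, RCLike.star_def, Complex.re_sum]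
  exact Finset.sum_congr rfl fun j _ => key _ _

-- row weights of a "unitary" matrix sum to one
lemma row_normSq_sum {n : ℕ} {Wm : Matrix (Fin n) (Fin n) ℂ} (h : Wm * star Wm = 1) (i : Fin n) :
    ∑ j, Complex.normSq (Wm i j) = 1 := by
  have h1 : ((Wm * star Wm) i i).re = 1 := by rw [h]; simp [Matrix.one_apply]
  rw [Matrix.mul_apply] at h1
  simp only [Matrix.star_apply, RCLike.star_def, Complex.re_sum] at h1
  rw [← h1]
  exact Finset.sum_congr rfl fun j _ => by rw [Complex.mul_conj, Complex.ofReal_re]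

end HP

namespace HP
open Matrix

lemma entry_re_abs_le {n : ℕ} (M : Matrix (Fin n) (Fin n) ℂ) {U : Matrix (Fin n) (Fin n) ℂ}
    (hU : star U * U = 1) (i : Fin n) :
    |((star U * M * U) i i).re| ≤ ‖Matrix.toEuclideanCLM (𝕜 := ℂ) M‖ := by
  set T := Matrix.toEuclideanCLM (𝕜 := ℂ) M with hT
  set u : Fin n → ℂ := fun j => U j i with hu
  set x : EuclideanSpace ℂ (Fin n) := (WithLp.equiv 2 _).symm u with hxdef
  have hx : ‖x‖ = 1 := by
    rw [EuclideanSpace.norm_eq]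
    have h1 : ((star U * U) i i).re = 1 := by rw [hU]; simp [Matrix.one_apply]
    rw [Matrix.mul_apply] at h1
    simp only [Matrix.star_apply, RCLike.star_def, Complex.re_sum] at h1
    have h2 : ∑ j, ‖x j‖ ^ 2 = 1 := by
      rw [← h1]
      refine Finset.sum_congr rfl fun j _ => ?_
      rw [mul_comm, Complex.mul_conj, Complex.ofReal_re, Complex.normSq_eq_norm_sq]
      simp [hxdef, hu]
    rw [h2, Real.sqrt_one]
  have happ : T x = (WithLp.equiv 2 _).symm (M *ᵥ u) :=
    rfl
  have hxy : (inner ℂ x (T x) : ℂ) = (star U * M * U) i i := by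
    rw [happ, mul_assoc, Matrix.mul_apply]
    simp only [PiLp.inner_apply, RCLike.inner_apply, WithLp.equiv_symm_apply, PiLp.toLp_apply]
    refine Finset.sum_congr rfl fun j _ => ?_
    simp [hxdef, hu, Matrix.mul_apply, Matrix.mulVec, dotProduct, Matrix.star_apply,
      Finset.mul_sum]
    rw [mul_comm, Finset.mul_sum]
  calc |((star U * M * U) i i).re| = |(inner ℂ x (T x) : ℂ).re| := by rw [hxy]
    _ ≤ ‖(inner ℂ x (T x) : ℂ)‖ := Complex.abs_re_le_norm _
    _ = ‖(inner ℂ x (T x) : ℂ)‖ := rfl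
    _ ≤ ‖x‖ * ‖T x‖ := norm_inner_le_norm x (T x)
    _ ≤ ‖x‖ * (‖T‖ * ‖x‖) := by
        exact mul_le_mul_of_nonneg_left (T.le_opNorm x) (norm_nonneg x)
    _ = ‖T‖ := by rw [hx]; ring

end HP

namespace HP
open Matrix

attribute [local instance] Matrix.instL2OpNormedRing Matrix.instL2OpNormedAlgebra

lemma exp_eq_cfc {n : ℕ} {A : Matrix (Fin n) (Fin n) ℂ} (hA : A.IsHermitian) :
    NormedSpace.exp A = cfc Real.exp A := by
  rw [← CFC.real_exp_eq_normedSpace_exp (a := A) hA]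

lemma exp_spectral {n : ℕ} {A : Matrix (Fin n) (Fin n) ℂ} (hA : A.IsHermitian) :
    NormedSpace.exp A = (hA.eigenvectorUnitary : Matrix (Fin n) (Fin n) ℂ) *
      Matrix.diagonal (fun i => (Real.exp (hA.eigenvalues i) : ℂ)) *
      star (hA.eigenvectorUnitary : Matrix (Fin n) (Fin n) ℂ) := by
  rw [exp_eq_cfc hA, hA.cfc_eq, Matrix.IsHermitian.cfc]
  rfl

lemma trace_exp {n : ℕ} {A : Matrix (Fin n) (Fin n) ℂ} (hA : A.IsHermitian) :
    (NormedSpace.exp A).trace = ((∑ i, Real.exp (hA.eigenvalues i) : ℝ) : ℂ) := by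
  have h1 : star (hA.eigenvectorUnitary : Matrix (Fin n) (Fin n) ℂ) *
      (hA.eigenvectorUnitary : Matrix (Fin n) (Fin n) ℂ) = 1 :=
    Unitary.star_mul_self_of_mem (SetLike.coe_mem _)
  rw [exp_spectral hA, Matrix.trace_mul_cycle, h1, one_mul, Matrix.trace_diagonal]
  push_cast
  rfl

lemma jensen_diag {n : ℕ} {A : Matrix (Fin n) (Fin n) ℂ} (hA : A.IsHermitian)
    {U : Matrix (Fin n) (Fin n) ℂ} (hU2 : star U * U = 1) (i : Fin n) :
    Real.exp (((star U * A * U) i i).re) ≤ ((star U * NormedSpace.exp A * U) i i).re := by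
  set V := (hA.eigenvectorUnitary : Matrix (Fin n) (Fin n) ℂ) with hV
  have hV1 : V * star V = 1 := Unitary.mul_star_self_of_mem (SetLike.coe_mem _)
  set Wm := star U * V with hWm
  have hWmU : Wm * star Wm = 1 := by
    rw [hWm, StarMul.star_mul, star_star, mul_assoc, ← mul_assoc V, hV1, one_mul, hU2]
  have hrow : ∑ j, Complex.normSq (Wm i j) = 1 := row_normSq_sum hWmU i
  have hA' : star U * A * U = Wm * Matrix.diagonal (fun j => ((hA.eigenvalues j : ℝ) : ℂ)) * star Wm := by
    conv_lhs => rw [hA.spectral_theorem]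
    rw [hWm, StarMul.star_mul, star_star]
    simp only [Unitary.conjStarAlgAut_apply, mul_assoc]
    rfl
  have hE' : star U * NormedSpace.exp A * U
      = Wm * Matrix.diagonal (fun j => ((Real.exp (hA.eigenvalues j) : ℝ) : ℂ)) * star Wm := by
    rw [exp_spectral hA, hWm, StarMul.star_mul, star_star]
    simp only [mul_assoc]
    rfl
  rw [hA', hE', conj_diag_entry, conj_diag_entry]
  have := convexOn_exp.map_sum_le (t := Finset.univ)
    (w := fun j => Complex.normSq (Wm i j)) (p := fun j => hA.eigenvalues j)
    (fun j _ => Complex.normSq_nonneg _) hrow (fun j _ => Set.mem_univ _)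
  simpa [smul_eq_mul] using this

end HP

namespace HP
open Matrix

lemma sum_exp_le {n : ℕ} {A B : Matrix (Fin n) (Fin n) ℂ} (hA : A.IsHermitian)
    (hB : B.IsHermitian) :
    Real.exp (-‖Matrix.toEuclideanCLM (𝕜 := ℂ) (A - B)‖) * ∑ i, Real.exp (hB.eigenvalues i)
      ≤ ∑ i, Real.exp (hA.eigenvalues i) := by
  set c := ‖Matrix.toEuclideanCLM (𝕜 := ℂ) (A - B)‖ with hc
  set U := (hB.eigenvectorUnitary : Matrix (Fin n) (Fin n) ℂ) with hUdef
  have hU2 : star U * U = 1 := Unitary.star_mul_self_of_mem (SetLike.coe_mem _)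
  have hU1 : U * star U = 1 := Unitary.mul_star_self_of_mem (SetLike.coe_mem _)
  -- the sum of exponentials of eigenvalues of A as a sum of diagonal entries
  have h1 : ∑ i, Real.exp (hA.eigenvalues i)
      = ∑ i, ((star U * NormedSpace.exp A * U) i i).re := by
    have ht : (NormedSpace.exp A).trace = (star U * NormedSpace.exp A * U).trace := by
      rw [Matrix.trace_mul_cycle, hU1, one_mul]
    have := trace_exp hA
    rw [ht] at this
    have := congrArg Complex.re this
    simp only [Complex.ofReal_re, Matrix.trace, Matrix.diag, Complex.re_sum] at this
    rw [← this]
  rw [h1, Finset.mul_sum]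
  refine Finset.sum_le_sum fun i _ => ?_
  have hj := jensen_diag hA hU2 i
  have hsplit : ((star U * A * U) i i).re
      = ((star U * B * U) i i).re + ((star U * (A - B) * U) i i).re := by
    have : star U * A * U = star U * B * U + star U * (A - B) * U := by
      rw [Matrix.mul_sub, Matrix.sub_mul]; abel
    rw [this]; simp [Matrix.add_apply]
  have hdiagB : ((star U * B * U) i i).re = hB.eigenvalues i := by
    rw [hUdef, show star (hB.eigenvectorUnitary : Matrix (Fin n) (Fin n) ℂ) * B * (hB.eigenvectorUnitary : Matrix (Fin n) (Fin n) ℂ) = diagonal (RCLike.ofReal ∘ hB.eigenvalues) by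
      conv_lhs => arg 1; arg 2; rw [hB.spectral_theorem, Unitary.conjStarAlgAut_apply]
      simp [← mul_assoc]
      rw [mul_assoc, Unitary.coe_star_mul_self, mul_one]]
    simp [Matrix.diagonal_apply_eq]
  have habs := entry_re_abs_le (A - B) hU2 i
  have hlow : hB.eigenvalues i - c ≤ ((star U * A * U) i i).re := by
    rw [hsplit, hdiagB]
    have := neg_abs_le (((star U * (A - B) * U) i i).re)
    linarith
  calc Real.exp (-c) * Real.exp (hB.eigenvalues i)
      = Real.exp (hB.eigenvalues i - c) := by rw [← Real.exp_add]; ring_nf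
    _ ≤ Real.exp (((star U * A * U) i i).re) := Real.exp_le_exp.mpr hlow
    _ ≤ ((star U * NormedSpace.exp A * U) i i).re := hj

end HP

namespace HP
open Matrix

attribute [local instance] Matrix.linftyOpNormedRing Matrix.linftyOpNormedAlgebra

lemma matLog_eq_cfc {n : ℕ} {A : Matrix (Fin n) (Fin n) ℂ} (hA : A.IsHermitian) :
    matLog A = cfc Real.log A := by
  rw [matLog, dif_pos hA, Matrix.IsHermitian.cfc_eq]
  rfl

lemma matLog_gibbs {n : ℕ} {A : Matrix (Fin n) (Fin n) ℂ} (hA : A.IsHermitian)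
    {Z : ℝ} (hZ : 0 < Z) (hZtr : (NormedSpace.exp A).trace = (Z : ℂ)) :
    matLog (((NormedSpace.exp A).trace)⁻¹ • NormedSpace.exp A)
      = A - algebraMap ℝ (Matrix (Fin n) (Fin n) ℂ) (Real.log Z) := by
  have hA' : IsSelfAdjoint A := hA
  have hσ : ((NormedSpace.exp A).trace)⁻¹ • NormedSpace.exp A
      = cfc (fun x : ℝ => Z⁻¹ * Real.exp x) A := by
    rw [cfc_const_mul _ _ A (by fun_prop), ← exp_eq_cfc hA, hZtr, ← Complex.ofReal_inv,
      ← Complex.coe_algebraMap, algebraMap_smul]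
  have hherm : (((NormedSpace.exp A).trace)⁻¹ • NormedSpace.exp A).IsHermitian := by
    rw [hσ]
    exact cfc_predicate _ A
  rw [matLog_eq_cfc hherm, hσ,
    ← cfc_comp Real.log (fun x : ℝ => Z⁻¹ * Real.exp x) A hA'
      (Real.continuousOn_log.mono (by
        rintro - ⟨x, -, rfl⟩
        simp only [Set.mem_compl_iff, Set.mem_singleton_iff]
        positivity))
      (by fun_prop)]
  have hfun : (Real.log ∘ fun x : ℝ => Z⁻¹ * Real.exp x) = fun x : ℝ => x - Real.log Z := by
    funext x
    simp only [Function.comp_apply,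
      Real.log_mul (inv_ne_zero hZ.ne') (Real.exp_ne_zero x), Real.log_inv, Real.log_exp]
    ring
  rw [hfun, cfc_sub (fun x : ℝ => x) (fun _ => Real.log Z) A (by fun_prop) (by fun_prop),
    cfc_id' ℝ A hA', cfc_const (Real.log Z) A hA']

lemma log_diff_abs_le {x y c : ℝ} (hy : 0 < y) (h1 : Real.exp (-c) * y ≤ x)
    (h2 : Real.exp (-c) * x ≤ y) : |Real.log x - Real.log y| ≤ c := by
  have hx : 0 < x := lt_of_lt_of_le (by positivity) h1
  have l1 : -c + Real.log y ≤ Real.log x := by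
    have := Real.log_le_log (by positivity) h1
    rwa [Real.log_mul (Real.exp_ne_zero _) hy.ne', Real.log_exp] at this
  have l2 : -c + Real.log x ≤ Real.log y := by
    have := Real.log_le_log (by positivity) h2
    rwa [Real.log_mul (Real.exp_ne_zero _) hx.ne', Real.log_exp] at this
  rw [abs_le]
  constructor <;> linarith

end HP


/-- Hiai–Petz estimate: for Hermitian `H, W`, the logs of the Gibbs density matrices of
`H + W` and of `H` differ by at most `2‖W‖` in operator norm. -/
theorem log_gibbs_perturbation_bound {n : ℕ} (hn : 0 < n)
    (H W σ τ : Matrix (Fin n) (Fin n) ℂ) (hH : H.IsHermitian) (hW : W.IsHermitian)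
    (hσ : σ = ((NormedSpace.exp (-(H + W))).trace)⁻¹ • NormedSpace.exp (-(H + W)))
    (hτ : τ = ((NormedSpace.exp (-H)).trace)⁻¹ • NormedSpace.exp (-H)) :
    opNorm (matLog σ - matLog τ) ≤ 2 * opNorm W := by
  classical
  have hK : (-(H + W)).IsHermitian := (hH.add hW).neg
  have hHm : (-H).IsHermitian := hH.neg
  set Z₁ : ℝ := ∑ i, Real.exp (hK.eigenvalues i) with hZ₁
  set Z₂ : ℝ := ∑ i, Real.exp (hHm.eigenvalues i) with hZ₂
  have hne : (Finset.univ : Finset (Fin n)).Nonempty := by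
    have : Nonempty (Fin n) := ⟨⟨0, hn⟩⟩
    exact Finset.univ_nonempty
  have hZ₁pos : 0 < Z₁ := Finset.sum_pos (fun i _ => Real.exp_pos _) hne
  have hZ₂pos : 0 < Z₂ := Finset.sum_pos (fun i _ => Real.exp_pos _) hne
  have hlogσ : matLog σ
      = -(H + W) - algebraMap ℝ (Matrix (Fin n) (Fin n) ℂ) (Real.log Z₁) := by
    rw [hσ]; exact HP.matLog_gibbs hK hZ₁pos (HP.trace_exp hK)
  have hlogτ : matLog τ
      = -H - algebraMap ℝ (Matrix (Fin n) (Fin n) ℂ) (Real.log Z₂) := by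
    rw [hτ]; exact HP.matLog_gibbs hHm hZ₂pos (HP.trace_exp hHm)
  have hdiff : matLog σ - matLog τ
      = -W - algebraMap ℝ (Matrix (Fin n) (Fin n) ℂ) (Real.log Z₁ - Real.log Z₂) := by
    rw [hlogσ, hlogτ, map_sub]
    abel
  -- the scalar bound
  have hnormneg : ∀ M : Matrix (Fin n) (Fin n) ℂ, opNorm (-M) = opNorm M := by
    intro M; rw [opNorm, opNorm, map_neg, norm_neg]
  have hb1 : Real.exp (-(opNorm W)) * Z₂ ≤ Z₁ := by
    have h := HP.sum_exp_le hK hHm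
    have he : -(H + W) - -H = -W := by abel
    rwa [he, ← opNorm, hnormneg] at h
  have hb2 : Real.exp (-(opNorm W)) * Z₁ ≤ Z₂ := by
    have h := HP.sum_exp_le hHm hK
    have he : -H - -(H + W) = W := by abel
    rwa [he, ← opNorm] at h
  have hscal : |Real.log Z₁ - Real.log Z₂| ≤ opNorm W :=
    HP.log_diff_abs_le hZ₂pos hb1 hb2
  -- assemble
  rw [hdiff, opNorm]
  set r : ℝ := Real.log Z₁ - Real.log Z₂ with hr
  have halg : (algebraMap ℝ (Matrix (Fin n) (Fin n) ℂ) r)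
      = algebraMap ℂ (Matrix (Fin n) (Fin n) ℂ) ((r : ℂ)) := by
    rw [IsScalarTower.algebraMap_apply ℝ ℂ (Matrix (Fin n) (Fin n) ℂ)]
    rfl
  rw [sub_eq_add_neg, map_add, map_neg, map_neg, halg, AlgHomClass.commutes]
  calc ‖-(Matrix.toEuclideanCLM (𝕜 := ℂ) W) + -(algebraMap ℂ _ (r : ℂ))‖
      ≤ ‖-(Matrix.toEuclideanCLM (𝕜 := ℂ) W)‖ + ‖-(algebraMap ℂ _ (r : ℂ))‖ := norm_add_le _ _
    _ = ‖Matrix.toEuclideanCLM (𝕜 := ℂ) W‖ + ‖algebraMap ℂ _ (r : ℂ)‖ := by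
        rw [norm_neg, norm_neg]
    _ ≤ opNorm W + |r| := by
        refine add_le_add le_rfl ?_
        have h1 : ‖(1 : EuclideanSpace ℂ (Fin n) →L[ℂ] EuclideanSpace ℂ (Fin n))‖ ≤ 1 := by
          rw [ContinuousLinearMap.one_def]
          exact ContinuousLinearMap.norm_id_le
        calc ‖algebraMap ℂ (EuclideanSpace ℂ (Fin n) →L[ℂ] EuclideanSpace ℂ (Fin n)) (r : ℂ)‖
            = ‖(r : ℂ)‖ * ‖(1 : EuclideanSpace ℂ (Fin n) →L[ℂ] EuclideanSpace ℂ (Fin n))‖ :=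
              norm_algebraMap _ _
          _ ≤ |r| * 1 := by
              rw [Complex.norm_real, Real.norm_eq_abs]
              exact mul_le_mul_of_nonneg_left h1 (abs_nonneg r)
          _ = |r| := mul_one _
    _ ≤ opNorm W + opNorm W := add_le_add le_rfl hscal
    _ = 2 * opNorm W := by ring
end

section
/- Let H and W be Hermitian n×n complex matrices, let σ = exp(−(H+W))/tr(exp(−(H+W))) and τ = exp(−H)/tr(exp(−H)), and let ρ be any positive definite density matrix. Then S(ρ|σ) − S(ρ|τ) ≤ 2‖W‖. (Finite-dimensional form of Proposition mil-la (1): the difference of relative entropies with respect to the perturbed and unperturbed Gibbs states is bounded by twice the norm of the perturbation.) -/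
open scoped Matrix ComplexOrder

/-- The relative entropy `S(ρ|σ) = Re tr(ρ(log ρ − log σ))` of positive definite density
matrices. -/
noncomputable def relEntropy {n : ℕ} (ρ σ : Matrix (Fin n) (Fin n) ℂ) : ℝ :=
  ((ρ * (matLog ρ - matLog σ)).trace).re

open Matrix NormedSpace

namespace MilLa

open scoped Matrix.Norms.L2Operator

variable {n : ℕ}

lemma diag_conj (U M : Matrix (Fin n) (Fin n) ℂ) (i : Fin n) :
    (star U * M * U) i i =
      dotProduct (star (fun k => U k i)) (M *ᵥ (fun k => U k i)) := by
  simp only [Matrix.mul_apply, Matrix.mulVec, dotProduct, Matrix.star_apply,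
    Pi.star_apply, Finset.sum_mul, Finset.mul_sum]
  rw [Finset.sum_comm]
  refine Finset.sum_congr rfl fun k _ => Finset.sum_congr rfl fun l _ => by ring

lemma quad_cfc (B : Matrix (Fin n) (Fin n) ℂ) (hB : B.IsHermitian) (f : ℝ → ℝ)
    (x : Fin n → ℂ) :
    dotProduct (star x) ((hB.cfc f) *ᵥ x) =
      ((∑ j, f (hB.eigenvalues j) *
        Complex.normSq ((star (hB.eigenvectorUnitary : Matrix (Fin n) (Fin n) ℂ) *ᵥ x) j) : ℝ) : ℂ) := by
  set V := (hB.eigenvectorUnitary : Matrix (Fin n) (Fin n) ℂ)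
  set w := star V *ᵥ x with hw
  have h1 : (hB.cfc f) *ᵥ x = V *ᵥ (Matrix.diagonal (RCLike.ofReal ∘ f ∘ hB.eigenvalues) *ᵥ w) := by
    simp [Matrix.IsHermitian.cfc, Matrix.mulVec_mulVec, Matrix.mul_assoc, hw]
    rfl
  have h2 : star x ⬝ᵥ (V *ᵥ (Matrix.diagonal (RCLike.ofReal ∘ f ∘ hB.eigenvalues) *ᵥ w))
      = star w ⬝ᵥ (Matrix.diagonal (RCLike.ofReal ∘ f ∘ hB.eigenvalues) *ᵥ w) := by
    rw [dotProduct_mulVec, hw, Matrix.star_mulVec, ← Matrix.star_eq_conjTranspose, star_star]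
  rw [h1, h2]
  simp only [dotProduct, Matrix.mulVec_diagonal, Pi.star_apply, Function.comp_apply]
  push_cast
  refine Finset.sum_congr rfl fun j _ => ?_
  rw [Complex.normSq_eq_conj_mul_self]
  simp only [RCLike.star_def]
  exact mul_left_comm ((starRingEnd ℂ) (w j)) _ (w j)

lemma exp_eq_cfc (B : Matrix (Fin n) (Fin n) ℂ) (hB : B.IsHermitian) :
    exp B = hB.cfc Real.exp := by
  rw [← Matrix.IsHermitian.cfc_eq, CFC.real_exp_eq_normedSpace_exp hB]

lemma id_eq_cfc (B : Matrix (Fin n) (Fin n) ℂ) (hB : B.IsHermitian) :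
    B = hB.cfc id := by
  simpa [Matrix.IsHermitian.cfc] using hB.spectral_theorem

lemma one_eq_cfc (B : Matrix (Fin n) (Fin n) ℂ) (hB : B.IsHermitian) :
    (1 : Matrix (Fin n) (Fin n) ℂ) = hB.cfc (fun _ => 1) := by
  simp only [Matrix.IsHermitian.cfc]
  simp only [Function.comp_def, RCLike.ofReal_one]
  rw [Matrix.diagonal_one]
  simp only [Unitary.conjStarAlgAut_apply, Matrix.mul_one]
  exact (Unitary.coe_mul_star_self hB.eigenvectorUnitary).symm

lemma matLog_eq_cfc (A : Matrix (Fin n) (Fin n) ℂ) (hA : A.IsHermitian) :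
    matLog A = cfc Real.log A := by
  rw [matLog, dif_pos hA, Matrix.IsHermitian.cfc_eq]
  rfl

lemma abs_re_quad (M : Matrix (Fin n) (Fin n) ℂ) (x : Fin n → ℂ) :
    |(dotProduct (star x) (M *ᵥ x)).re| ≤ opNorm M * (dotProduct (star x) x).re := by
  set v : EuclideanSpace ℂ (Fin n) := (WithLp.equiv 2 _).symm x with hv
  have h1 : (inner ℂ v (Matrix.toEuclideanCLM (𝕜 := ℂ) M v) : ℂ)
      = dotProduct (star x) (M *ᵥ x) := by
    rw [EuclideanSpace.inner_eq_star_dotProduct]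
    simp [hv, Matrix.toLin'_apply]
    exact dotProduct_comm _ _
  have h2 : ((inner ℂ v v : ℂ)).re = (dotProduct (star x) x).re := by
    rw [EuclideanSpace.inner_eq_star_dotProduct]
    simp [hv]
    rw [dotProduct_comm]
  have h3 : ‖(inner ℂ v (Matrix.toEuclideanCLM (𝕜 := ℂ) M v) : ℂ)‖
      ≤ opNorm M * ‖v‖ ^ 2 := by
    calc ‖(inner ℂ v (Matrix.toEuclideanCLM (𝕜 := ℂ) M v) : ℂ)‖
        ≤ ‖v‖ * ‖Matrix.toEuclideanCLM (𝕜 := ℂ) M v‖ := norm_inner_le_norm _ _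
      _ ≤ ‖v‖ * (opNorm M * ‖v‖) := by
          gcongr
          exact (Matrix.toEuclideanCLM (𝕜 := ℂ) M).le_opNorm v
      _ = opNorm M * ‖v‖ ^ 2 := by ring
  have h4 : ‖v‖ ^ 2 = (dotProduct (star x) x).re := by
    rw [← h2, ← inner_self_eq_norm_sq (𝕜 := ℂ) v]
    rfl
  calc |(dotProduct (star x) (M *ᵥ x)).re|
      ≤ ‖dotProduct (star x) (M *ᵥ x)‖ := Complex.abs_re_le_norm _
    _ = ‖(inner ℂ v (Matrix.toEuclideanCLM (𝕜 := ℂ) M v) : ℂ)‖ := by rw [h1]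
    _ ≤ opNorm M * ‖v‖ ^ 2 := h3
    _ = opNorm M * (dotProduct (star x) x).re := by rw [h4]

lemma trace_cfc' (B : Matrix (Fin n) (Fin n) ℂ) (hB : B.IsHermitian) (f : ℝ → ℝ) :
    (hB.cfc f).trace = ((∑ i, f (hB.eigenvalues i) : ℝ) : ℂ) := by
  rw [Matrix.IsHermitian.cfc, Unitary.conjStarAlgAut_apply, Matrix.trace_mul_cycle, Unitary.coe_star_mul_self,
    Matrix.one_mul, Matrix.trace_diagonal]
  push_cast
  rfl

lemma trace_conj_diag (U M : Matrix (Fin n) (Fin n) ℂ) (hU : U ∈ Matrix.unitaryGroup (Fin n) ℂ) :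
    M.trace = ∑ i, (star U * M * U) i i := by
  have h : (star U * M * U).trace = M.trace := by
    rw [Matrix.trace_mul_cycle, Unitary.mul_star_self_of_mem hU, Matrix.one_mul]
  rw [← h, Matrix.trace]
  rfl

/-- Peierls' inequality for a unit vector. -/
lemma peierls (B : Matrix (Fin n) (Fin n) ℂ) (hB : B.IsHermitian) (u : Fin n → ℂ)
    (hu : dotProduct (star u) u = 1) :
    Real.exp ((dotProduct (star u) (B *ᵥ u)).re)
      ≤ (dotProduct (star u) ((exp B) *ᵥ u)).re := by
  set V := (hB.eigenvectorUnitary : Matrix (Fin n) (Fin n) ℂ)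
  set p : Fin n → ℝ := fun j => Complex.normSq ((star V *ᵥ u) j) with hp
  have hsum : ∑ j, p j = 1 := by
    have h := quad_cfc B hB (fun _ => 1) u
    rw [← one_eq_cfc B hB, Matrix.one_mulVec, hu] at h
    have := (Complex.ofReal_eq_one).mp h.symm
    simpa using this
  have hB' : (dotProduct (star u) (B *ᵥ u)).re = ∑ j, hB.eigenvalues j * p j := by
    have h := quad_cfc B hB id u
    rw [← id_eq_cfc B hB] at h
    rw [h, Complex.ofReal_re]
    rfl
  have hExp : (dotProduct (star u) ((exp B) *ᵥ u)).re
      = ∑ j, Real.exp (hB.eigenvalues j) * p j := by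
    have h := quad_cfc B hB Real.exp u
    rw [← exp_eq_cfc B hB] at h
    rw [h, Complex.ofReal_re]
  rw [hB', hExp]
  have := convexOn_exp.map_sum_le (t := Finset.univ) (w := p) (p := fun j => hB.eigenvalues j)
    (fun j _ => Complex.normSq_nonneg _) hsum (fun j _ => Set.mem_univ _)
  simp only [smul_eq_mul] at this
  calc Real.exp (∑ j, hB.eigenvalues j * p j)
      = Real.exp (∑ j, p j * hB.eigenvalues j) := by
        congr 1; exact Finset.sum_congr rfl fun j _ => mul_comm _ _
    _ ≤ ∑ j, p j * Real.exp (hB.eigenvalues j) := this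
    _ = ∑ j, Real.exp (hB.eigenvalues j) * p j :=
        Finset.sum_congr rfl fun j _ => mul_comm _ _

/-- Monotonicity of the trace of the exponential. -/
lemma trace_exp_mono (A B : Matrix (Fin n) (Fin n) ℂ) (hA : A.IsHermitian) (hB : B.IsHermitian)
    (hle : ∀ x : Fin n → ℂ, (dotProduct (star x) (A *ᵥ x)).re
      ≤ (dotProduct (star x) (B *ᵥ x)).re) :
    ((exp A).trace).re ≤ ((exp B).trace).re := by
  set U := (hA.eigenvectorUnitary : Matrix (Fin n) (Fin n) ℂ) with hU
  set u : Fin n → Fin n → ℂ := fun i k => U k i with hu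
  have hunit : ∀ i, dotProduct (star (u i)) (u i) = 1 := by
    intro i
    have h := diag_conj U 1 i
    rw [Matrix.mul_one, Unitary.coe_star_mul_self, Matrix.one_mulVec,
      Matrix.one_apply_eq] at h
    exact h.symm
  have hvecu : ∀ i, u i = ⇑(hA.eigenvectorBasis i) := by
    intro i; funext k; simp [hu, hU]
  have heig : ∀ i, hA.eigenvalues i = (dotProduct (star (u i)) (A *ᵥ u i)).re := by
    intro i
    rw [hvecu i]
    exact hA.eigenvalues_eq i
  have hA' : ((exp A).trace).re = ∑ i, Real.exp (hA.eigenvalues i) := by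
    rw [exp_eq_cfc A hA, trace_cfc', Complex.ofReal_re]
  have hB' : ((exp B).trace).re = ∑ i, (dotProduct (star (u i)) ((exp B) *ᵥ u i)).re := by
    rw [trace_conj_diag U (exp B) hA.eigenvectorUnitary.2]
    rw [Complex.re_sum]
    exact Finset.sum_congr rfl fun i _ => by rw [diag_conj]
  rw [hA', hB']
  refine Finset.sum_le_sum fun i _ => ?_
  calc Real.exp (hA.eigenvalues i)
      = Real.exp ((dotProduct (star (u i)) (A *ᵥ u i)).re) := by rw [← heig]
    _ ≤ Real.exp ((dotProduct (star (u i)) (B *ᵥ u i)).re) :=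
        Real.exp_le_exp.mpr (hle (u i))
    _ ≤ (dotProduct (star (u i)) ((exp B) *ᵥ u i)).re := peierls B hB (u i) (hunit i)

lemma exp_spectrum_pos (M : Matrix (Fin n) (Fin n) ℂ) (hM : M.IsHermitian) :
    ∀ x ∈ spectrum ℝ (exp M), 0 < x := by
  have h : exp M = cfc Real.exp M := by
    rw [CFC.real_exp_eq_normedSpace_exp hM]
  have hspec : spectrum ℝ (cfc Real.exp M) = Real.exp '' spectrum ℝ M :=
    cfc_map_spectrum (R := ℝ) (f := Real.exp) (a := M) hM Real.continuous_exp.continuousOn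
  intro x hx
  rw [h, hspec] at hx
  obtain ⟨y, -, rfl⟩ := hx
  exact Real.exp_pos y

lemma trace_exp_eq (M : Matrix (Fin n) (Fin n) ℂ) (hM : M.IsHermitian) :
    (exp M).trace = ((∑ i, Real.exp (hM.eigenvalues i) : ℝ) : ℂ) := by
  rw [exp_eq_cfc M hM, trace_cfc']

lemma trace_exp_exists (hn : 0 < n) (M : Matrix (Fin n) (Fin n) ℂ) (hM : M.IsHermitian) :
    ∃ t : ℝ, 0 < t ∧ (exp M).trace = (t : ℂ) := by
  refine ⟨∑ i, Real.exp (hM.eigenvalues i), ?_, trace_exp_eq M hM⟩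
  have : Nonempty (Fin n) := Fin.pos_iff_nonempty.mp hn
  exact Finset.sum_pos (fun i _ => Real.exp_pos _) Finset.univ_nonempty

lemma ofReal_smul_eq (r : ℝ) (A : Matrix (Fin n) (Fin n) ℂ) :
    ((r : ℂ)) • A = r • A := by
  ext i j
  simp [Complex.real_smul]

lemma matLog_gibbs (M : Matrix (Fin n) (Fin n) ℂ) (hM : M.IsHermitian)
    (t : ℝ) (ht : 0 < t) (htr : (exp M).trace = (t : ℂ)) :
    matLog (((exp M).trace)⁻¹ • exp M) = M - (Real.log t) • 1 := by
  set E := exp M with hE_def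
  have hE : E.IsHermitian := hM.exp
  have hsmul : ((E.trace)⁻¹ : ℂ) • E = (t⁻¹ : ℝ) • E := by
    rw [htr, ← Complex.ofReal_inv, ← ofReal_smul_eq]
  have hMsa : IsSelfAdjoint M := hM
  have hEsa : IsSelfAdjoint E := hE
  have hlog : cfc Real.log ((t⁻¹ : ℝ) • E) =
      algebraMap ℝ (Matrix (Fin n) (Fin n) ℂ) (Real.log t⁻¹) + cfc Real.log E := by
    exact CFC.log_smul E (fun x hx => (exp_spectrum_pos M hM x hx).ne') (inv_pos.mpr ht).ne' hEsa
  have hlogE : cfc Real.log E = M := by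
    have : E = exp M := by rw [hE_def]
    rw [this]
    exact CFC.log_exp M hMsa
  have hherm : (((t⁻¹ : ℝ)) • E).IsHermitian := IsSelfAdjoint.smul (star_trivial _) hEsa
  calc matLog ((E.trace)⁻¹ • E) = cfc Real.log ((t⁻¹ : ℝ) • E) := by
        rw [hsmul] at *
        exact matLog_eq_cfc _ hherm
    _ = algebraMap ℝ (Matrix (Fin n) (Fin n) ℂ) (Real.log t⁻¹) + cfc Real.log E := hlog
    _ = M - (Real.log t) • 1 := by
        rw [hlogE, Real.log_inv, Algebra.algebraMap_eq_smul_one]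
        module

-- appended to master: Bound 1
lemma re_trace_mul_le (ρ M : Matrix (Fin n) (Fin n) ℂ) (hρ : ρ.IsHermitian)
    (hev : ∀ i, 0 ≤ hρ.eigenvalues i) :
    ((ρ * M).trace).re ≤ opNorm M * (ρ.trace).re := by
  set U := (hρ.eigenvectorUnitary : Matrix (Fin n) (Fin n) ℂ) with hU
  set u : Fin n → Fin n → ℂ := fun i k => U k i with hu
  set d : Fin n → ℝ := hρ.eigenvalues with hd
  -- unit vectors
  have hunit : ∀ i, dotProduct (star (u i)) (u i) = 1 := by
    intro i
    have h := diag_conj U 1 i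
    rw [Matrix.mul_one, Unitary.coe_star_mul_self, Matrix.one_mulVec,
      Matrix.one_apply_eq] at h
    exact h.symm
  -- trace ρ
  have htrρ : (ρ.trace).re = ∑ i, d i := by
    rw [id_eq_cfc ρ hρ, trace_cfc', Complex.ofReal_re]
    rfl
  -- trace (ρ * M)
  have key : (ρ * M).trace = ∑ i, ((d i : ℂ)) * dotProduct (star (u i)) (M *ᵥ u i) := by
    have hρeq : ρ = U * Matrix.diagonal (RCLike.ofReal ∘ d) * star U := hρ.spectral_theorem
    have h1 : (ρ * M).trace = (Matrix.diagonal (RCLike.ofReal ∘ d) * (star U * M * U)).trace := by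
      conv_lhs => rw [hρeq]
      rw [Matrix.mul_assoc, Matrix.mul_assoc, Matrix.trace_mul_comm, ← Matrix.mul_assoc,
        Matrix.mul_assoc]
      congr 1
      simp only [Matrix.mul_assoc]
    rw [h1, Matrix.trace]
    refine Finset.sum_congr rfl fun i _ => ?_
    rw [Matrix.diag_apply, Matrix.diagonal_mul, diag_conj]
    rfl
  rw [key, htrρ, Complex.re_sum, Finset.mul_sum]
  refine Finset.sum_le_sum fun i _ => ?_
  have h2 : ((d i : ℂ) * dotProduct (star (u i)) (M *ᵥ u i)).re
      = d i * (dotProduct (star (u i)) (M *ᵥ u i)).re := Complex.re_ofReal_mul _ _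
  rw [h2]
  have h3 : (dotProduct (star (u i)) (M *ᵥ u i)).re ≤ opNorm M := by
    have := abs_re_quad M (u i)
    rw [hunit i] at this
    simp only [Complex.one_re, mul_one] at this
    exact (abs_le.mp this).2
  calc d i * (dotProduct (star (u i)) (M *ᵥ u i)).re
      ≤ d i * opNorm M := mul_le_mul_of_nonneg_left h3 (hev i)
    _ = opNorm M * d i := mul_comm _ _

lemma smul_one_herm (c : ℝ) : (((c : ℂ)) • (1 : Matrix (Fin n) (Fin n) ℂ)).IsHermitian := by
  unfold Matrix.IsHermitian
  rw [Matrix.conjTranspose_smul, Matrix.conjTranspose_one, RCLike.star_def, Complex.conj_ofReal]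

theorem main (hn : 0 < n)
    (H W σ τ ρ : Matrix (Fin n) (Fin n) ℂ) (hH : H.IsHermitian) (hW : W.IsHermitian)
    (hσ : σ = ((NormedSpace.exp (-(H + W))).trace)⁻¹ • NormedSpace.exp (-(H + W)))
    (hτ : τ = ((NormedSpace.exp (-H)).trace)⁻¹ • NormedSpace.exp (-H))
    (hρ : ρ.PosDef) (hρ1 : ρ.trace = 1) :
    relEntropy ρ σ - relEntropy ρ τ ≤ 2 * opNorm W := by
  set c := opNorm W with hc
  have hHW : (-(H + W)).IsHermitian := (hH.add hW).neg
  have hmH : (-H).IsHermitian := hH.neg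
  obtain ⟨t₁, ht₁, htr₁⟩ := trace_exp_exists hn _ hHW
  obtain ⟨t₂, ht₂, htr₂⟩ := trace_exp_exists hn _ hmH
  have hσlog : matLog σ = -(H + W) - Real.log t₁ • 1 := by
    rw [hσ]; exact matLog_gibbs _ hHW t₁ ht₁ htr₁
  have hτlog : matLog τ = -H - Real.log t₂ • 1 := by
    rw [hτ]; exact matLog_gibbs _ hmH t₂ ht₂ htr₂
  have hmul : ρ * (matLog ρ - matLog σ) - ρ * (matLog ρ - matLog τ)
      = ρ * (matLog τ - matLog σ) := by
    rw [← Matrix.mul_sub]; congr 1; abel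
  have hdiff : relEntropy ρ σ - relEntropy ρ τ = ((ρ * (matLog τ - matLog σ)).trace).re := by
    rw [relEntropy, relEntropy, ← Complex.sub_re, ← Matrix.trace_sub, hmul]
  have hLL : matLog τ - matLog σ = W + (Real.log t₁ - Real.log t₂) • 1 := by
    rw [hσlog, hτlog]; module
  have htr : ((ρ * (matLog τ - matLog σ)).trace).re
      = ((ρ * W).trace).re + (Real.log t₁ - Real.log t₂) := by
    rw [hLL, Matrix.mul_add, Matrix.mul_smul, Matrix.mul_one, Matrix.trace_add,
      Matrix.trace_smul, hρ1, Complex.add_re]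
    congr 1
    simp [Complex.real_smul]
  -- Bound A
  have hA : ((ρ * W).trace).re ≤ c := by
    have h := re_trace_mul_le ρ W hρ.1 (fun i => (hρ.eigenvalues_pos i).le)
    rw [hρ1, Complex.one_re, mul_one] at h
    exact h
  -- Bound B
  have hBh : (-H + (c : ℂ) • 1).IsHermitian := hmH.add (smul_one_herm c)
  have hle : ∀ x : Fin n → ℂ, (dotProduct (star x) ((-(H + W)) *ᵥ x)).re
      ≤ (dotProduct (star x) ((-H + (c : ℂ) • 1) *ᵥ x)).re := by
    intro x
    have hq := abs_re_quad W x
    have hxx : 0 ≤ (dotProduct (star x) x).re := by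
      have h0 : dotProduct (star x) x = ∑ i, star (x i) * x i := rfl
      rw [h0, Complex.re_sum]
      refine Finset.sum_nonneg fun i _ => ?_
      rw [RCLike.star_def, mul_comm, Complex.mul_conj, Complex.ofReal_re]
      exact Complex.normSq_nonneg _
    have e1 : (-(H + W)) *ᵥ x = -(H *ᵥ x) - W *ᵥ x := by
      rw [Matrix.neg_mulVec, Matrix.add_mulVec]; abel
    have e2 : (-H + (c : ℂ) • 1) *ᵥ x = -(H *ᵥ x) + (c : ℂ) • x := by
      rw [Matrix.add_mulVec, Matrix.neg_mulVec, Matrix.smul_mulVec, Matrix.one_mulVec]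
    rw [e1, e2, dotProduct_sub, dotProduct_add, dotProduct_smul,
      Complex.sub_re, Complex.add_re, smul_eq_mul, Complex.re_ofReal_mul]
    have := abs_le.mp hq
    linarith [this.1, this.2]
  have hexpB : exp (-H + (c : ℂ) • 1) = Complex.exp c • exp (-H) := by
    rw [Matrix.exp_add_of_commute (-H) ((c : ℂ) • 1) ((Commute.one_right (-H)).smul_right _)]
    have h1 : ((c : ℂ) • (1 : Matrix (Fin n) (Fin n) ℂ))
        = algebraMap ℂ (Matrix (Fin n) (Fin n) ℂ) ((c : ℂ)) := (Algebra.algebraMap_eq_smul_one _).symm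
    rw [h1, ← NormedSpace.algebraMap_exp_comm, ← Complex.exp_eq_exp_ℂ,
      Algebra.algebraMap_eq_smul_one, mul_smul_comm, mul_one]
  have htrB : ((exp (-H + (c : ℂ) • 1)).trace).re = Real.exp c * t₂ := by
    rw [hexpB, Matrix.trace_smul, htr₂, smul_eq_mul, ← Complex.ofReal_exp,
      ← Complex.ofReal_mul, Complex.ofReal_re]
  have hmono := trace_exp_mono _ _ hHW hBh hle
  rw [htrB] at hmono
  rw [htr₁, Complex.ofReal_re] at hmono
  have hB2 : Real.log t₁ - Real.log t₂ ≤ c := by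
    have hpos : (0:ℝ) < Real.exp c * t₂ := by positivity
    have h1 : Real.log t₁ ≤ Real.log (Real.exp c * t₂) :=
      (Real.log_le_log_iff ht₁ hpos).mpr hmono
    rw [Real.log_mul (Real.exp_ne_zero c) (ne_of_gt ht₂), Real.log_exp] at h1
    linarith
  rw [hdiff, htr]
  linarith

end MilLa

/-- Proposition mil-la (1) in finite dimension: for any positive definite density matrix `ρ`,
`S(ρ|σ) − S(ρ|τ) ≤ 2‖W‖` where `σ, τ` are the Gibbs densities of `H + W` and `H`. -/
theorem relEntropy_difference_bound {n : ℕ} (hn : 0 < n)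
    (H W σ τ ρ : Matrix (Fin n) (Fin n) ℂ) (hH : H.IsHermitian) (hW : W.IsHermitian)
    (hσ : σ = ((NormedSpace.exp (-(H + W))).trace)⁻¹ • NormedSpace.exp (-(H + W)))
    (hτ : τ = ((NormedSpace.exp (-H)).trace)⁻¹ • NormedSpace.exp (-H))
    (hρ : ρ.PosDef) (hρ1 : ρ.trace = 1) :
    relEntropy ρ σ - relEntropy ρ τ ≤ 2 * opNorm W := by
  exact MilLa.main hn H W σ τ ρ hH hW hσ hτ hρ hρ1
end
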